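/- arXiv:1402.2762 — 11 statements merged into one kernel-verified Lean document; each statement's English description precedes it below -/
import Mathlib

section
/- Let P be a closed subsemigroup of a locally compact group G containing the identity. Then G = PP⁻¹ if and only if P generates G and for all a, b ∈ P the intersection aP ∩ bP is nonempty. -/
open Pointwise

/-- Let `P` be a closed subsemigroup of a locally compact group `G` containing the identity.
Then `G = P * P⁻¹` iff `P` generates `G` and for all `a b ∈ P`, `aP ∩ bP ≠ ∅`. -/
theorem stmt0 {G : Type*} [Group G] [TopologicalSpace G] [IsTopologicalGroup G]
    [LocallyCompactSpace G] [T2Space G] [SecondCountableTopology G]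
    (P : Set G) (hP_closed : IsClosed P) (hP_one : (1 : G) ∈ P)
    (hP_mul : ∀ a ∈ P, ∀ b ∈ P, a * b ∈ P) :
    P * P⁻¹ = Set.univ ↔
      (Subgroup.closure P = ⊤ ∧ ∀ a ∈ P, ∀ b ∈ P, (a • P ∩ b • P).Nonempty) := by
  constructor
  · intro h
    constructor
    · rw [eq_top_iff]
      intro g _
      have hg : g ∈ P * P⁻¹ := h ▸ Set.mem_univ g
      obtain ⟨a, ha, b, hb, rfl⟩ := hg
      have hb' : b⁻¹ ∈ P := Set.mem_inv.mp hb
      exact mul_mem (Subgroup.subset_closure ha)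
        ((Subgroup.inv_mem_iff _).mp (Subgroup.subset_closure hb'))
    · intro a ha b hb
      have hg : a⁻¹ * b ∈ P * P⁻¹ := h ▸ Set.mem_univ _
      obtain ⟨p, hp, q, hq, hpq⟩ := hg
      have hq' : q⁻¹ ∈ P := Set.mem_inv.mp hq
      refine ⟨a * p, ⟨p, hp, rfl⟩, q⁻¹, hq', ?_⟩
      have hpq' : p * q = a⁻¹ * b := hpq
      have : a * (p * q) = b := by rw [hpq']; group
      simp only [smul_eq_mul]
      calc b * q⁻¹ = a * (p * q) * q⁻¹ := by rw [this]
        _ = a * p := by group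
  · rintro ⟨hgen, hdir⟩
    have hPsub : ∀ x ∈ P, x ∈ P * P⁻¹ := fun x hx =>
      ⟨x, hx, 1, by simpa using hP_one, mul_one x⟩
    let H : Subgroup G :=
      { carrier := P * P⁻¹
        one_mem' := ⟨1, hP_one, 1, by simpa using hP_one, mul_one 1⟩
        inv_mem' := by
          rintro x ⟨a, ha, b, hb, rfl⟩
          exact ⟨b⁻¹, Set.mem_inv.mp hb, a⁻¹, Set.inv_mem_inv.mpr ha, (mul_inv_rev a b).symm⟩
        mul_mem' := by
          rintro x y ⟨a, ha, b, hb, rfl⟩ ⟨c, hc, d, hd, rfl⟩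
          have hb' : b⁻¹ ∈ P := Set.mem_inv.mp hb
          have hd' : d⁻¹ ∈ P := Set.mem_inv.mp hd
          obtain ⟨z, ⟨p, hp, hzp⟩, ⟨q, hq, hzq⟩⟩ := hdir b⁻¹ hb' c hc
          simp only [smul_eq_mul] at hzp hzq
          refine ⟨a * p, hP_mul a ha p hp, (d⁻¹ * q)⁻¹,
            Set.mem_inv.mpr (by simpa using hP_mul _ hd' q hq), ?_⟩
          have hbc : b * (c * q) = p := by rw [hzq, ← hzp]; group
          calc a * p * (d⁻¹ * q)⁻¹ = a * (b * (c * q)) * (d⁻¹ * q)⁻¹ := by rw [hbc]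
            _ = a * b * (c * d) := by group }
    have hle : Subgroup.closure P ≤ H := (Subgroup.closure_le H).mpr hPsub
    ext g
    simp only [Set.mem_univ, iff_true]
    exact hle (hgen ▸ Subgroup.mem_top g)
end

section
/- Let G be a topological group and P ⊆ G a closed subsemigroup with e ∈ P such that G = PP⁻¹ and Int(P) is dense in P. Then Int(P) is nonempty and G = Int(P)·Int(P)⁻¹. -/
open Pointwise

/-- If `P` is a closed subsemigroup of a locally compact group `G` with `1 ∈ P`, `G = PP⁻¹` and
`Int(P)` dense in `P`, then `Int(P)` is nonempty and `G = Int(P) * Int(P)⁻¹`. -/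
theorem stmt2 {G : Type*} [Group G] [TopologicalSpace G] [IsTopologicalGroup G]
    [LocallyCompactSpace G] [T2Space G] [SecondCountableTopology G]
    (P : Set G) (hP_closed : IsClosed P) (hP_one : (1 : G) ∈ P)
    (hP_mul : ∀ a ∈ P, ∀ b ∈ P, a * b ∈ P)
    (hOre : P * P⁻¹ = Set.univ)
    (hdense : P ⊆ closure (interior P)) :
    (interior P).Nonempty ∧ interior P * (interior P)⁻¹ = Set.univ := by
  have hne : (interior P).Nonempty := by
    by_contra h
    rw [Set.not_nonempty_iff_eq_empty] at h
    have := hdense hP_one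
    rw [h, closure_empty] at this
    exact this
  obtain ⟨u, hu⟩ := hne
  refine ⟨⟨u, hu⟩, ?_⟩
  have key : ∀ c ∈ P, c * u ∈ interior P := by
    intro c hc
    have hsub : c • interior P ⊆ P := by
      rintro x ⟨y, hy, rfl⟩
      exact hP_mul c hc y (interior_subset hy)
    have hopen : IsOpen (c • interior P) := isOpen_interior.smul c
    exact interior_maximal hsub hopen (Set.smul_mem_smul_set hu)
  ext g
  simp only [Set.mem_univ, iff_true]
  have hg : g ∈ P * P⁻¹ := by rw [hOre]; trivial
  obtain ⟨a, ha, b', hb', hab⟩ := hg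
  rw [Set.mem_inv] at hb'
  refine ⟨a * u, key a ha, (b'⁻¹ * u)⁻¹, Set.inv_mem_inv.2 (key b'⁻¹ hb'), ?_⟩
  rw [← hab]; group
end

section
/- Let G be a locally compact group and P a closed subsemigroup with e ∈ P, G = PP⁻¹, and Int(P) dense in P. Then the linear span of the set of convolutions ψ * φ, with ψ ∈ L¹(P) and φ ∈ L¹(P⁻¹) both compactly supported, is dense in L¹(G). -/
open MeasureTheory Pointwise Function Set Filter

private lemma lemA {G : Type*} [Group G] [TopologicalSpace G] [IsTopologicalGroup G]
    [LocallyCompactSpace G]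
    {g : G → ℝ} (hg : Continuous g) (hcs : HasCompactSupport g) {δ : ℝ} (hδ : 0 < δ) :
    ∃ V ∈ nhds (1 : G), ∀ v ∈ V, ∀ x, |g (v * x) - g x| ≤ δ := by
  obtain ⟨N, hN_comp, hN_mem⟩ := exists_compact_mem_nhds (1 : G)
  set K := tsupport g with hK
  have hKcomp : IsCompact K := hcs
  set K' : Set G := N⁻¹ * K ∪ K with hK'
  have hK'comp : IsCompact K' := (hN_comp.inv.mul hKcomp).union hKcomp
  -- for each x, find nbhds
  have key : ∀ x : G, ∃ V ∈ nhds (1 : G), ∃ U ∈ nhds x, ∀ v ∈ V, ∀ y ∈ U,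
      |g (v * y) - g x| < δ / 2 := by
    intro x
    have hc : ContinuousAt (fun p : G × G => g (p.1 * p.2)) (1, x) :=
      (hg.comp continuous_mul).continuousAt
    have : ∀ᶠ p : G × G in nhds ((1 : G), x), |g (p.1 * p.2) - g x| < δ / 2 := by
      have := hc.eventually_mem (Metric.ball_mem_nhds (g ((1:G) * x)) (by positivity : (0:ℝ) < δ/2))
      filter_upwards [this] with p hp
      simpa [Real.dist_eq, one_mul] using hp
    rw [nhds_prod_eq, Filter.eventually_prod_iff] at this
    obtain ⟨pa, hpa, pb, hpb, h⟩ := this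
    exact ⟨{v | pa v}, hpa, {y | pb y}, hpb, fun v hv y hy => h hv hy⟩
  choose V hV U hU hVU using key
  obtain ⟨t, _, ht⟩ := hK'comp.elim_nhds_subcover U (fun x _ => hU x)
  refine ⟨N ∩ ⋂ x ∈ t, V x, Filter.inter_mem hN_mem ((Filter.biInter_mem t.finite_toSet).mpr
    (fun x _ => hV x)), fun v hv x => ?_⟩
  by_cases hx : x ∈ K'
  · obtain ⟨z, hz⟩ := Set.mem_iUnion.mp (ht hx)
    obtain ⟨hzt, hxz⟩ := Set.mem_iUnion.mp hz
    have h1 : |g (v * x) - g z| < δ / 2 :=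
      hVU z v (Set.mem_iInter₂.mp hv.2 z hzt) x hxz
    have h2 : |g (1 * x) - g z| < δ / 2 :=
      hVU z 1 (mem_of_mem_nhds (hV z)) x hxz
    rw [one_mul] at h2
    calc |g (v * x) - g x| ≤ |g (v * x) - g z| + |g z - g x| := abs_sub_le _ _ _
      _ ≤ δ / 2 + δ / 2 := by rw [abs_sub_comm (g z)]; exact add_le_add h1.le h2.le
      _ = δ := by ring
  · have hgx : g x = 0 := image_eq_zero_of_notMem_tsupport (fun h => hx (Or.inr h))
    have hgvx : g (v * x) = 0 := by
      apply image_eq_zero_of_notMem_tsupport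
      intro h
      exact hx (Or.inl ⟨v⁻¹, Set.inv_mem_inv.mpr (mem_of_mem_nhds (by exact hN_mem) |> fun _ => hv.1), v * x, h, by group⟩)
    simp [hgx, hgvx, hδ.le]

private lemma lemB {G : Type*} [Group G] [TopologicalSpace G] [IsTopologicalGroup G]
    [LocallyCompactSpace G] [T2Space G] [SecondCountableTopology G]
    [MeasurableSpace G] [BorelSpace G]
    (μ : Measure G) [μ.IsHaarMeasure] (P : Set G) {p : G} (hp : p ∈ interior P)
    {gc : G → ℝ} (hgc : Continuous gc) (hgcs : HasCompactSupport gc)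
    (hsupp : support gc ⊆ p • (interior P)⁻¹) {δ : ℝ} (hδ : 0 < δ) :
    ∃ ψ φ : G → ℝ, Integrable ψ μ ∧ Integrable φ μ ∧
      HasCompactSupport ψ ∧ HasCompactSupport φ ∧
      support ψ ⊆ P ∧ support φ ⊆ P⁻¹ ∧
      Integrable (fun x => ∫ t, ψ t * φ (t⁻¹ * x) ∂μ) μ ∧
      ∫ x, |gc x - ∫ t, ψ t * φ (t⁻¹ * x) ∂μ| ∂μ ≤ δ := by
  obtain ⟨N, hN_comp, hN_mem⟩ := exists_compact_mem_nhds (1 : G)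
  set K := tsupport gc with hK
  have hKcomp : IsCompact K := hgcs
  set K₂ : Set G := N * K ∪ K with hK₂
  have hK₂comp : IsCompact K₂ := (hN_comp.mul hKcomp).union hKcomp
  set m : ℝ := (μ K₂).toReal with hm
  have hm0 : 0 ≤ m := ENNReal.toReal_nonneg
  set δ' : ℝ := δ / (m + 1) with hδ'def
  have hδ' : 0 < δ' := div_pos hδ (by linarith)
  obtain ⟨V, hV_mem, hV⟩ := lemA hgc hgcs hδ'
  -- the open set containing p
  set Ω : Set G := ((fun t => t * p⁻¹) ⁻¹' interior N) ∩
      ((fun t => p * t⁻¹) ⁻¹' interior V) ∩ interior P with hΩ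
  have hΩopen : IsOpen Ω :=
    (((isOpen_interior.preimage (continuous_mul_right p⁻¹)).inter
      (isOpen_interior.preimage (continuous_const.mul continuous_inv))).inter isOpen_interior)
  have hpΩ : p ∈ Ω := by
    refine ⟨⟨?_, ?_⟩, hp⟩
    · simpa using mem_interior_iff_mem_nhds.mpr hN_mem
    · simpa using mem_interior_iff_mem_nhds.mpr hV_mem
  -- bump function
  obtain ⟨ψ₀, hψ₀one, hψ₀zero, hψ₀cs, hψ₀Icc⟩ :=
    exists_continuous_one_zero_of_isCompact (isCompact_singleton (x := p))
      hΩopen.isClosed_compl (disjoint_left.mpr (fun x hx => by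
        simp only [mem_singleton_iff] at hx; subst hx; simp [hpΩ]))
  have hψ₀supp : support ψ₀ ⊆ Ω := by
    intro x hx
    by_contra hxΩ
    exact hx (hψ₀zero hxΩ)
  have hψ₀nn : ∀ x, 0 ≤ ψ₀ x := fun x => (hψ₀Icc x).1
  have hψ₀int : Integrable ψ₀ μ := ψ₀.continuous.integrable_of_hasCompactSupport hψ₀cs
  have hψ₀suppopen : IsOpen (support ψ₀) := ψ₀.continuous.isOpen_support
  have hc : 0 < ∫ x, ψ₀ x ∂μ := by
    rw [integral_pos_iff_support_of_nonneg hψ₀nn hψ₀int]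
    exact hψ₀suppopen.measure_pos μ ⟨p, by simp [hψ₀one rfl]⟩
  set c : ℝ := ∫ x, ψ₀ x ∂μ with hcdef
  set ψ : G → ℝ := fun t => c⁻¹ * ψ₀ t with hψdef
  set φ : G → ℝ := fun y => gc (p * y) with hφdef
  have hψcont : Continuous ψ := continuous_const.mul ψ₀.continuous
  have hψcs : HasCompactSupport ψ := by
    apply hψ₀cs.mono
    intro x hx
    simp only [hψdef, mem_support] at hx ⊢
    exact fun h => hx (by rw [h, mul_zero])
  have hψsupp : support ψ ⊆ Ω := fun x hx => hψ₀supp (by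
    simp only [hψdef, mem_support] at hx
    exact fun h => hx (by rw [h, mul_zero]))
  have hψnn : ∀ t, 0 ≤ ψ t := fun t => mul_nonneg (inv_nonneg.mpr hc.le) (hψ₀nn t)
  have hψint : Integrable ψ μ := hψ₀int.const_mul _
  have hψone : ∫ t, ψ t ∂μ = 1 := by
    rw [hψdef]
    simp only []
    rw [integral_const_mul]
    exact inv_mul_cancel₀ hc.ne'
  have hφcont : Continuous φ := hgc.comp (continuous_const.mul continuous_id)
  have hφcs : HasCompactSupport φ := hgcs.comp_homeomorph (Homeomorph.mulLeft p)
  have hφint : Integrable φ μ := hφcont.integrable_of_hasCompactSupport hφcs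
  have hψP : support ψ ⊆ P := fun x hx => interior_subset (hψsupp hx).2
  have hφP : support φ ⊆ P⁻¹ := by
    intro y hy
    have : p * y ∈ support gc := hy
    obtain ⟨z, hz, hzy⟩ := hsupp this
    have : y = z := by
      have := hzy
      simp only [smul_eq_mul] at this
      exact (mul_left_cancel this).symm
    subst this
    exact Set.inv_subset_inv.mpr interior_subset hz
  -- the convolution
  set h : G → ℝ := fun x => ∫ t, ψ t * φ (t⁻¹ * x) ∂μ with hhdef
  have hFc : Continuous (fun q : G × G => ψ q.2 * φ (q.2⁻¹ * q.1)) :=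
    (hψcont.comp continuous_snd).mul
      (hφcont.comp ((continuous_snd.inv).mul continuous_fst))
  have hhsm : StronglyMeasurable h :=
    hFc.stronglyMeasurable.integral_prod_right'
  have hIx : ∀ x : G, Integrable (fun t => ψ t * φ (t⁻¹ * x)) μ := by
    intro x
    apply Continuous.integrable_of_hasCompactSupport
    · exact hψcont.mul (hφcont.comp ((continuous_inv).mul continuous_const))
    · exact hψcs.mul_right
  -- claim 0 : vanishing outside K₂
  have claim0 : ∀ x ∉ K₂, gc x = 0 ∧ h x = 0 := by
    intro x hx
    constructor
    · exact image_eq_zero_of_notMem_tsupport (fun hc => hx (Or.inr hc))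
    · rw [hhdef]
      simp only []
      rw [show (fun t => ψ t * φ (t⁻¹ * x)) = fun _ => (0:ℝ) from ?_, integral_zero]
      funext t
      by_cases hψt : ψ t = 0
      · rw [hψt, zero_mul]
      by_cases hφt : φ (t⁻¹ * x) = 0
      · rw [hφt, mul_zero]
      exfalso
      apply hx
      have htΩ : t ∈ Ω := hψsupp hψt
      have h1 : t * p⁻¹ ∈ N := interior_subset htΩ.1.1
      have h2 : p * (t⁻¹ * x) ∈ K := subset_closure (hφt : p * (t⁻¹ * x) ∈ support gc)
      left
      exact ⟨t * p⁻¹, h1, p * (t⁻¹ * x), h2, by group⟩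
  -- claim 1 : pointwise bound
  have claim1 : ∀ x, |gc x - h x| ≤ δ' := by
    intro x
    have e1 : gc x = ∫ t, ψ t * gc x ∂μ := by
      rw [integral_mul_const, hψone, one_mul]
    have e2 : gc x - h x = ∫ t, ψ t * (gc x - φ (t⁻¹ * x)) ∂μ := by
      conv_lhs => rw [e1]
      rw [hhdef]
      simp only []
      rw [← integral_sub (hψint.mul_const _) (hIx x)]
      congr 1
      funext t
      ring
    rw [e2]
    calc |∫ t, ψ t * (gc x - φ (t⁻¹ * x)) ∂μ| ≤ ∫ t, |ψ t| * |gc x - φ (t⁻¹ * x)| ∂μ := by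
          simpa [Real.norm_eq_abs] using
            norm_integral_le_integral_norm (fun t => ψ t * (gc x - φ (t⁻¹ * x))) (μ := μ)
      _ ≤ ∫ t, ψ t * δ' ∂μ := by
          apply integral_mono_of_nonneg (ae_of_all _ fun t => mul_nonneg (abs_nonneg _) (abs_nonneg _))
            (hψint.mul_const _) (ae_of_all _ fun t => ?_)
          simp only []
          by_cases hψt : ψ t = 0
          · simp [hψt]
          have htΩ : t ∈ Ω := hψsupp hψt
          have hv : p * t⁻¹ ∈ V := interior_subset htΩ.1.2
          have : φ (t⁻¹ * x) = gc ((p * t⁻¹) * x) := by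
            simp only [hφdef]; rw [mul_assoc]
          rw [abs_of_nonneg (hψnn t), this]
          apply mul_le_mul_of_nonneg_left _ (hψnn t)
          rw [abs_sub_comm]
          exact hV _ hv x
      _ = δ' := by rw [integral_mul_const, hψone, one_mul]
  have hK₂meas : MeasurableSet K₂ := hK₂comp.isClosed.measurableSet
  have hbound_int : Integrable (K₂.indicator (fun _ => δ')) μ :=
    (integrable_indicator_iff hK₂meas).mpr
      ((integrableOn_const_iff).mpr (Or.inr hK₂comp.measure_lt_top))
  have hptwise : ∀ x, |gc x - h x| ≤ K₂.indicator (fun _ => δ') x := by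
    intro x
    by_cases hx : x ∈ K₂
    · rw [Set.indicator_of_mem hx]
      exact claim1 x
    · rw [Set.indicator_of_notMem hx]
      obtain ⟨h1, h2⟩ := claim0 x hx
      simp [h1, h2]
  have hgc_int : Integrable gc μ := hgc.integrable_of_hasCompactSupport hgcs
  have hd_int : Integrable (fun x => gc x - h x) μ := by
    apply Integrable.mono' hbound_int
      ((hgc.stronglyMeasurable.sub hhsm).aestronglyMeasurable)
      (ae_of_all _ fun x => ?_)
    rw [Real.norm_eq_abs]
    exact hptwise x
  have hh_int : Integrable h μ := by
    have h2 := hgc_int.sub hd_int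
    have heq : gc - (fun x => gc x - h x) = h := by
      funext x; simp only [Pi.sub_apply]; ring
    rwa [heq] at h2
  refine ⟨ψ, φ, hψint, hφint, hψcs, hφcs, hψP, hφP, hh_int, ?_⟩
  calc ∫ x, |gc x - h x| ∂μ ≤ ∫ x, K₂.indicator (fun _ => δ') x ∂μ :=
        integral_mono_of_nonneg (ae_of_all _ fun x => abs_nonneg _) hbound_int
          (ae_of_all _ hptwise)
    _ = m * δ' := by rw [integral_indicator_const _ hK₂meas]; simp [hm, mul_comm, Measure.real]
    _ ≤ (m + 1) * δ' := by nlinarith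
    _ = δ := by rw [hδ'def]; field_simp

/-- For a closed Ore subsemigroup `P` of a locally compact group `G` with `Int(P)` dense in `P`,
the linear span of convolutions `ψ * φ` with `ψ ∈ L¹(P)`, `φ ∈ L¹(P⁻¹)` compactly supported
is dense in `L¹(G)`. -/
theorem stmt4 {G : Type*} [Group G] [TopologicalSpace G] [IsTopologicalGroup G]
    [LocallyCompactSpace G] [T2Space G] [SecondCountableTopology G]
    [MeasurableSpace G] [BorelSpace G]
    (μ : Measure G) [μ.IsHaarMeasure]
    (P : Set G) (hP_closed : IsClosed P) (hP_one : (1 : G) ∈ P)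
    (hP_mul : ∀ a ∈ P, ∀ b ∈ P, a * b ∈ P)
    (hOre : P * P⁻¹ = Set.univ)
    (hdense : P ⊆ closure (interior P))
    (F : Set (G → ℝ))
    (hF : F = {h | ∃ ψ φ : G → ℝ, Integrable ψ μ ∧ Integrable φ μ ∧
        HasCompactSupport ψ ∧ HasCompactSupport φ ∧
        Function.support ψ ⊆ P ∧ Function.support φ ⊆ P⁻¹ ∧
        h = fun x => ∫ t, ψ t * φ (t⁻¹ * x) ∂μ}) :
    ∀ f : G → ℝ, Integrable f μ → ∀ ε > 0,
      ∃ h ∈ Submodule.span ℝ F, ∫ x, |f x - h x| ∂μ < ε := by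
  intro f hf ε hε
  -- the interior of P is nonempty
  have hintne : (interior P).Nonempty := by
    rcases Set.eq_empty_or_nonempty (interior P) with h | h
    · exfalso
      have := hdense hP_one
      rw [h, closure_empty] at this
      exact this
    · exact h
  obtain ⟨s, hs⟩ := hintne
  -- geometric lemma
  have geom : ∀ x : G, ∃ p ∈ interior P, x ∈ p • (interior P)⁻¹ := by
    intro x
    have hx : x ∈ P * P⁻¹ := by rw [hOre]; trivial
    obtain ⟨a, ha, binv, hbinv, hab⟩ := Set.mem_mul.mp hx
    have hb : binv⁻¹ ∈ P := hbinv
    have smul_int : ∀ c ∈ P, c • interior P ⊆ interior P := by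
      intro c hc
      apply interior_maximal _ (isOpen_interior.smul c)
      rintro y ⟨z, hz, rfl⟩
      exact hP_mul c hc z (interior_subset hz)
    have has' : a * s ∈ interior P :=
      smul_int a ha (Set.smul_mem_smul_set hs)
    have hbs : binv⁻¹ * s ∈ interior P :=
      smul_int binv⁻¹ hb (Set.smul_mem_smul_set hs)
    refine ⟨a * s, has', ⟨(binv⁻¹ * s)⁻¹, Set.inv_mem_inv.mpr hbs, ?_⟩⟩
    simp only [smul_eq_mul]
    rw [← hab]
    group
  -- approximate f by a continuous compactly supported g
  obtain ⟨g, hgcs, hfg, hgcont, hgint⟩ :=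
    hf.exists_hasCompactSupport_integral_sub_le (show (0:ℝ) < ε/3 by linarith)
  set K := tsupport g with hKdef
  have hKcomp : IsCompact K := hgcs
  choose pfun hpfun hmem using geom
  set W : G → Set G := fun x => pfun x • (interior P)⁻¹ with hWdef
  have hWopen : ∀ x, IsOpen (W x) := fun x => (isOpen_interior.inv).smul _
  obtain ⟨tset, _, htcover⟩ := hKcomp.elim_nhds_subcover W
    (fun x _ => (hWopen x).mem_nhds (hmem x))
  set ι := {y // y ∈ tset} with hιdef
  haveI : Fintype ι := FinsetCoe.fintype tset
  set U : ι → Set G := fun i => W i.1 with hUdef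
  have hcover : K ⊆ ⋃ i : ι, U i := by
    intro x hx
    obtain ⟨y, hy, hxy⟩ := Set.mem_iUnion₂.mp (htcover hx)
    exact Set.mem_iUnion.mpr ⟨⟨y, hy⟩, hxy⟩
  obtain ⟨bc, hbc_sub, hbc_cs⟩ :=
    BumpCovering.exists_isSubordinate_hasCompactSupport_of_locallyFinite_t2space hKcomp U
      (fun i => hWopen _) (locallyFinite_of_finite U) hcover
  set pou := bc.toPartitionOfUnity with hpoudef
  have hpou_sub : ∀ i, tsupport (pou i) ⊆ U i := hbc_sub.toPartitionOfUnity
  set n := Fintype.card ι with hndef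
  set δ : ℝ := ε / (3 * (n + 1)) with hδdef
  have hδpos : 0 < δ := by positivity
  -- per-index approximation
  have approx : ∀ i : ι, ∃ h : G → ℝ, h ∈ F ∧ Integrable h μ ∧
      ∫ x, |pou i x * g x - h x| ∂μ ≤ δ := by
    intro i
    have hgc_i_cont : Continuous (fun x => pou i x * g x) := (pou i).continuous.mul hgcont
    have hgc_i_cs : HasCompactSupport (fun x => pou i x * g x) :=
      hgcs.mul_left (f := ⇑(pou i))
    have hsupp_i : support (fun x => pou i x * g x) ⊆ pfun i.1 • (interior P)⁻¹ := by
      intro x hx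
      have hne : pou i x ≠ 0 := by
        intro h0
        apply hx
        simp [h0]
      exact hpou_sub i (subset_closure hne)
    obtain ⟨ψ, φ, h1, h2, h3, h4, h5, h6, h7, h8⟩ :=
      lemB μ P (hpfun i.1) hgc_i_cont hgc_i_cs hsupp_i hδpos
    exact ⟨fun x => ∫ t, ψ t * φ (t⁻¹ * x) ∂μ,
      hF ▸ ⟨ψ, φ, h1, h2, h3, h4, h5, h6, rfl⟩, h7, h8⟩
  choose hfun hhF hhint hhest using approx
  refine ⟨∑ i : ι, hfun i,
    Submodule.sum_mem _ (fun i _ => Submodule.subset_span (hhF i)), ?_⟩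
  have hgsum : ∀ x, g x = ∑ i : ι, pou i x * g x := by
    intro x
    rw [← Finset.sum_mul]
    by_cases hx : x ∈ K
    · have h1 : ∑ᶠ i, pou i x = 1 := pou.sum_eq_one hx
      rw [finsum_eq_sum_of_fintype] at h1
      rw [h1, one_mul]
    · rw [image_eq_zero_of_notMem_tsupport hx, mul_zero]
  have hgi_int : ∀ i : ι, Integrable (fun x => pou i x * g x) μ := fun i =>
    ((pou i).continuous.mul hgcont).integrable_of_hasCompactSupport
      (hgcs.mul_left (f := ⇑(pou i)))
  have hsum_int : Integrable (fun x => ∑ i : ι, |pou i x * g x - hfun i x|) μ :=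
    integrable_finset_sum _ fun i _ => ((hgi_int i).sub (hhint i)).abs
  have h1' : Integrable (fun x => |f x - g x|) μ := (hf.sub hgint).abs
  have hbound_int : Integrable
      (fun x => |f x - g x| + ∑ i : ι, |pou i x * g x - hfun i x|) μ :=
    h1'.add hsum_int
  calc ∫ x, |f x - (∑ i : ι, hfun i) x| ∂μ
      ≤ ∫ x, (|f x - g x| + ∑ i : ι, |pou i x * g x - hfun i x|) ∂μ := by
        apply integral_mono_of_nonneg (ae_of_all _ fun x => abs_nonneg _) hbound_int
          (ae_of_all _ fun x => ?_)
        simp only [Finset.sum_apply]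
        have heq : f x - ∑ i : ι, hfun i x
            = (f x - g x) + ∑ i : ι, (pou i x * g x - hfun i x) := by
          rw [Finset.sum_sub_distrib, ← hgsum x]
          ring
        rw [heq]
        exact (abs_add_le _ _).trans
          (add_le_add_right (Finset.abs_sum_le_sum_abs _ _) _)
    _ = (∫ x, |f x - g x| ∂μ) + ∑ i : ι, ∫ x, |pou i x * g x - hfun i x| ∂μ := by
        rw [integral_add h1' hsum_int,
          integral_finset_sum _ fun i _ =>
            (show Integrable (fun x => |pou i x * g x - hfun i x|) μ from
              ((hgi_int i).sub (hhint i)).abs)]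
    _ ≤ ε/3 + ∑ _i : ι, δ := add_le_add hfg (Finset.sum_le_sum fun i _ => hhest i)
    _ = ε/3 + n * δ := by
        rw [Finset.sum_const, nsmul_eq_mul]
        simp [hndef]
    _ < ε := by
        have h1 : (n : ℝ) * δ ≤ ε/3 := by
          rw [hδdef]
          calc (n:ℝ) * (ε/(3*(n+1))) ≤ ((n:ℝ)+1) * (ε/(3*(n+1))) := by
                apply mul_le_mul_of_nonneg_right (by linarith) (by positivity)
            _ = ε/3 := by field_simp
        linarith
end

section
/- Let G be a locally compact group, P ⊆ G a closed subsemigroup with e ∈ P and Int(P) dense in P. Let A ⊆ G be closed with AP ⊆ A. Then the interior of A is dense in A. -/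
open Pointwise

/-- If `P` is a closed subsemigroup of a locally compact group `G` with `1 ∈ P` and `Int(P)`
dense in `P`, and `A ⊆ G` is closed with `AP ⊆ A`, then `Int(A)` is dense in `A`. -/
theorem stmt6 {G : Type*} [Group G] [TopologicalSpace G] [IsTopologicalGroup G]
    [LocallyCompactSpace G] [T2Space G] [SecondCountableTopology G]
    (P : Set G) (hP_closed : IsClosed P) (hP_one : (1 : G) ∈ P)
    (hP_mul : ∀ a ∈ P, ∀ b ∈ P, a * b ∈ P)
    (hP_dense : P ⊆ closure (interior P))
    (A : Set G) (hA_closed : IsClosed A) (hAP : A * P ⊆ A) :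
    A ⊆ closure (interior A) := by
  intro a ha
  have hsub : a • interior P ⊆ interior A := by
    apply interior_maximal _ (isOpen_interior.smul a)
    intro x hx
    obtain ⟨p, hp, rfl⟩ := hx
    exact hAP ⟨a, ha, p, interior_subset hp, rfl⟩
  have h1 : a ∈ closure (a • interior P) := by
    rw [closure_smul]
    exact ⟨1, hP_dense hP_one, mul_one a⟩
  exact closure_mono hsub h1
end

section
/- Let G be a locally compact group with Haar measure, P ⊆ G a closed subsemigroup with e ∈ P and Int(P) dense in P. Let A ⊆ G be closed with AP ⊆ A. Then the topological boundary ∂A of A has Haar measure zero. -/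
open Pointwise MeasureTheory

/-- If `P` is a closed subsemigroup of a locally compact group `G` with `1 ∈ P` and `Int(P)`
dense in `P`, and `A ⊆ G` is closed with `AP ⊆ A`, then the boundary `∂A` has Haar
measure zero. -/
theorem stmt7 {G : Type*} [Group G] [TopologicalSpace G] [IsTopologicalGroup G]
    [LocallyCompactSpace G] [T2Space G] [SecondCountableTopology G]
    [MeasurableSpace G] [BorelSpace G]
    (μ : Measure G) [μ.IsHaarMeasure]
    (P : Set G) (hP_closed : IsClosed P) (hP_one : (1 : G) ∈ P)
    (hP_mul : ∀ a ∈ P, ∀ b ∈ P, a * b ∈ P)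
    (hP_dense : P ⊆ closure (interior P))
    (A : Set G) (hA_closed : IsClosed A) (hAP : A * P ⊆ A) :
    μ (frontier A) = 0 := by
  by_contra h
  -- `A * interior P` is open and contained in `A`, so it lies in the interior of `A`.
  have hAint : A * interior P ⊆ interior A := by
    apply interior_maximal
    · exact (Set.mul_subset_mul_left interior_subset).trans hAP
    · exact isOpen_interior.mul_left
  -- key: a boundary point right-translated by an element of `interior P` lands in `interior A`
  have hkey : ∀ b ∈ frontier A, ∀ p ∈ interior P, b * p ∈ interior A := by
    intro b hb p hp
    exact hAint (Set.mul_mem_mul (hA_closed.frontier_subset hb) hp)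
  have hBmeas : MeasurableSet (frontier A) := isClosed_frontier.measurableSet
  haveI : μ.InnerRegular := inferInstance
  have hEpos : 0 < μ (frontier A)⁻¹ := by
    rw [pos_iff_ne_zero]
    simpa [measure_inv_null] using h
  have hnhds : (frontier A)⁻¹ / (frontier A)⁻¹ ∈ nhds (1 : G) :=
    MeasureTheory.Measure.div_mem_nhds_one_of_haar_pos μ _ hBmeas.inv hEpos
  -- `1 ∈ closure (interior P)`, so this neighborhood of `1` meets `interior P`.
  have h1 : (1 : G) ∈ closure (interior P) := hP_dense hP_one
  obtain ⟨q, hq1, hq2⟩ := (mem_closure_iff_nhds.1 h1 _ hnhds)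
  obtain ⟨a, ha, b, hb, hab⟩ := Set.mem_div.1 hq1
  have hx : a⁻¹ ∈ frontier A := Set.mem_inv.1 ha
  have hy : b⁻¹ ∈ frontier A := Set.mem_inv.1 hb
  have hyx : b⁻¹ = a⁻¹ * q := by rw [← hab]; rw [div_eq_mul_inv]; group
  have : b⁻¹ ∈ interior A := hyx ▸ hkey _ hx q hq2
  exact (Set.disjoint_right.1 disjoint_interior_frontier hy) this
end

section
/- Let G be a topological group, P a closed subsemigroup with e ∈ P, G = PP⁻¹, and suppose X is a compact Hausdorff space with a continuous injective right action of P. If g ∈ G satisfies g = ab⁻¹ = a₁b₁⁻¹ with a,b,a₁,b₁ ∈ P, then for x, y ∈ X one has xa = yb if and only if xa₁ = yb₁. -/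
open Pointwise

private lemma stmt8_aux {G : Type*} [Group G]
    (P : Set G)
    (hP_mul : ∀ a ∈ P, ∀ b ∈ P, a * b ∈ P)
    (hOre : P * P⁻¹ = Set.univ)
    {X : Type*}
    (act : X → G → X)
    (hact_mul : ∀ x, ∀ a ∈ P, ∀ b ∈ P, act (act x a) b = act x (a * b))
    (hact_inj : ∀ a ∈ P, Function.Injective (fun x => act x a))
    (a b a₁ b₁ : G) (ha : a ∈ P) (hb : b ∈ P) (ha₁ : a₁ ∈ P) (hb₁ : b₁ ∈ P)
    (hg : a * b⁻¹ = a₁ * b₁⁻¹) (x y : X)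
    (h : act x a = act y b) : act x a₁ = act y b₁ := by
  -- obtain α, β ∈ P with a⁻¹ * a₁ = α * β⁻¹
  have hmem : a⁻¹ * a₁ ∈ P * P⁻¹ := by rw [hOre]; trivial
  obtain ⟨α, hα, β', hβ', hαβ⟩ := hmem
  obtain ⟨β, hβ, rfl⟩ : ∃ β ∈ P, β' = β⁻¹ := ⟨β'⁻¹, hβ', (inv_inv β').symm⟩
  have hαβ' : α * β⁻¹ = a⁻¹ * a₁ := hαβ
  have hα' : α = a⁻¹ * a₁ * β := by rw [mul_inv_eq_iff_eq_mul] at hαβ'; exact hαβ'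
  have h1 : a₁ * β = a * α := by rw [hα']; group
  have hab : a⁻¹ * a₁ = b⁻¹ * b₁ := by
    rw [mul_inv_eq_iff_eq_mul] at hg
    rw [hg]; group
  have h3 : b₁ * β = b * α := by rw [hα', hab]; group
  apply hact_inj β hβ
  show act (act x a₁) β = act (act y b₁) β
  rw [hact_mul x a₁ ha₁ β hβ, hact_mul y b₁ hb₁ β hβ, h1, h3,
    ← hact_mul x a ha α hα, ← hact_mul y b hb α hα, h]

/-- For an injective right action of an Ore semigroup `P ⊆ G` on a compact Hausdorff space `X`:
if `g = ab⁻¹ = a₁b₁⁻¹` with `a,b,a₁,b₁ ∈ P`, then for `x, y ∈ X`, `xa = yb ↔ xa₁ = yb₁`. -/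
theorem stmt8 {G : Type*} [Group G] [TopologicalSpace G] [IsTopologicalGroup G]
    (P : Set G) (hP_closed : IsClosed P) (hP_one : (1 : G) ∈ P)
    (hP_mul : ∀ a ∈ P, ∀ b ∈ P, a * b ∈ P)
    (hOre : P * P⁻¹ = Set.univ)
    {X : Type*} [TopologicalSpace X] [CompactSpace X] [T2Space X]
    (act : X → G → X)
    (hact_cont : ContinuousOn (fun p : X × G => act p.1 p.2) (Set.univ ×ˢ P))
    (hact_one : ∀ x, act x 1 = x)
    (hact_mul : ∀ x, ∀ a ∈ P, ∀ b ∈ P, act (act x a) b = act x (a * b))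
    (hact_inj : ∀ a ∈ P, Function.Injective (fun x => act x a))
    (a b a₁ b₁ : G) (ha : a ∈ P) (hb : b ∈ P) (ha₁ : a₁ ∈ P) (hb₁ : b₁ ∈ P)
    (hg : a * b⁻¹ = a₁ * b₁⁻¹) (x y : X) :
    act x a = act y b ↔ act x a₁ = act y b₁ :=
  ⟨stmt8_aux P hP_mul hOre act hact_mul hact_inj a b a₁ b₁ ha hb ha₁ hb₁ hg x y,
   stmt8_aux P hP_mul hOre act hact_mul hact_inj a₁ b₁ a b ha₁ hb₁ ha hb hg.symm x y⟩
end

section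
/- Let P be a closed Ore subsemigroup of a locally compact group G (e ∈ P, G = PP⁻¹, Int(P) dense in P), and let X be a compact Hausdorff space with a continuous injective right P-action. Then the set 𝒢 := {(x,g) ∈ X × G : ∃ a,b ∈ P, y ∈ X with g = ab⁻¹ and xa = yb} is closed in X × G. -/
open Pointwise

/-- For a closed Ore subsemigroup `P` of a locally compact group `G` acting injectively and
continuously on a compact Hausdorff space `X`, the set
`𝒢 = {(x,g) : ∃ a b ∈ P, y ∈ X, g = ab⁻¹ and xa = yb}` is closed in `X × G`. -/
theorem stmt9 {G : Type*} [Group G] [TopologicalSpace G] [IsTopologicalGroup G]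
    [LocallyCompactSpace G] [T2Space G] [SecondCountableTopology G]
    (P : Set G) (hP_closed : IsClosed P) (hP_one : (1 : G) ∈ P)
    (hP_mul : ∀ a ∈ P, ∀ b ∈ P, a * b ∈ P)
    (hOre : P * P⁻¹ = Set.univ)
    (hP_dense : P ⊆ closure (interior P))
    {X : Type*} [TopologicalSpace X] [CompactSpace X] [T2Space X]
    (act : X → G → X)
    (hact_cont : ContinuousOn (fun p : X × G => act p.1 p.2) (Set.univ ×ˢ P))
    (hact_one : ∀ x, act x 1 = x)
    (hact_mul : ∀ x, ∀ a ∈ P, ∀ b ∈ P, act (act x a) b = act x (a * b))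
    (hact_inj : ∀ a ∈ P, Function.Injective (fun x => act x a))
    (𝒢 : Set (X × G))
    (h𝒢 : 𝒢 = {p : X × G | ∃ a ∈ P, ∃ b ∈ P, ∃ y : X,
        p.2 = a * b⁻¹ ∧ act p.1 a = act y b}) :
    IsClosed 𝒢 := by
  -- Key transfer lemma: a witness for one decomposition of g works for any other.
  have key : ∀ x y : X, ∀ a ∈ P, ∀ b ∈ P, ∀ a' ∈ P, ∀ b' ∈ P,
      a * b⁻¹ = a' * b'⁻¹ → act x a = act y b → act x a' = act y b' := by
    intro x y a ha b hb a' ha' b' hb' heq hxy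
    have hmem : a⁻¹ * a' ∈ P * P⁻¹ := by rw [hOre]; trivial
    rcases Set.mem_mul.mp hmem with ⟨c, hc, dinv, hdinv, hcd⟩
    have hdP : dinv⁻¹ ∈ P := Set.mem_inv.mp hdinv
    set d := dinv⁻¹ with hd
    have hcd' : a⁻¹ * a' = c * d⁻¹ := by rw [hd, inv_inv]; exact hcd.symm
    have h1 : a' * d = a * c := by
      have ha'eq : a' = a * (c * d⁻¹) := by rw [← hcd']; group
      rw [ha'eq]; group
    have h2 : b⁻¹ * b' = a⁻¹ * a' := by
      have : b'⁻¹ = a'⁻¹ * (a * b⁻¹) := by rw [heq]; group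
      rw [show b' = (b'⁻¹)⁻¹ by rw [inv_inv], this]
      group
    have h3 : b' * d = b * c := by
      have hb2 : b⁻¹ * b' = c * d⁻¹ := h2.trans hcd'
      have : b' = b * (c * d⁻¹) := by rw [← hb2]; group
      rw [this]; group
    have e1 : act x (a' * d) = act x (a * c) := by rw [h1]
    rw [← hact_mul x a' ha' d hdP, ← hact_mul x a ha c hc, hxy,
      hact_mul y b hb c hc, ← h3, ← hact_mul y b' hb' d hdP] at e1
    exact hact_inj d hdP e1
  rw [← closure_subset_iff_isClosed]
  rintro ⟨x, g⟩ hxg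
  -- Decompose g = a * b⁻¹ with a ∈ interior P.
  have hgmem : g ∈ P * P⁻¹ := by rw [hOre]; trivial
  rcases Set.mem_mul.mp hgmem with ⟨a₀, ha₀, b₀inv, hb₀inv, hab₀⟩
  have hb₀ : b₀inv⁻¹ ∈ P := Set.mem_inv.mp hb₀inv
  set b₀ := b₀inv⁻¹ with hb₀def
  have hg : g = a₀ * b₀⁻¹ := by rw [hb₀def, inv_inv]; exact hab₀.symm
  obtain ⟨p, hp⟩ : (interior P).Nonempty := by
    have := hP_dense hP_one
    rcases (closure_nonempty_iff.mp ⟨1, this⟩) with ⟨q, hq⟩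
    exact ⟨q, hq⟩
  -- a := a₀ * p ∈ interior P, b := b₀ * p ∈ P
  set a : G := a₀ * p with hadef
  set b : G := b₀ * p with hbdef
  have hpP : p ∈ P := interior_subset hp
  have haP : a ∈ P := hP_mul a₀ ha₀ p hpP
  have hbP : b ∈ P := hP_mul b₀ hb₀ p hpP
  have haint : a ∈ interior P := by
    have hopen : IsOpen ((fun z => a₀ * z) '' interior P) :=
      (Homeomorph.mulLeft a₀).isOpenMap _ isOpen_interior
    have hsub : (fun z => a₀ * z) '' interior P ⊆ P := by
      rintro _ ⟨z, hz, rfl⟩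
      exact hP_mul a₀ ha₀ z (interior_subset hz)
    exact interior_maximal hsub hopen ⟨p, hp, rfl⟩
  have hgb : g * b = a := by rw [hg, hbdef, hadef]; group
  -- The open neighborhood V of g and the closed set S.
  set V : Set G := (fun g' => g' * b) ⁻¹' interior P with hVdef
  have hVopen : IsOpen V := isOpen_interior.preimage (continuous_mul_right b)
  have hgV : g ∈ V := by simp only [hVdef, Set.mem_preimage, hgb]; exact haint
  set W : Set G := (fun g' => g' * b) ⁻¹' P with hWdef
  have hWclosed : IsClosed W := hP_closed.preimage (continuous_mul_right b)
  have hVW : V ⊆ W := fun z hz => Set.mem_preimage.mpr (interior_subset (Set.mem_preimage.mp hz))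
  -- R = range of (· b), a compact hence closed subset of X
  have hbcont : Continuous (fun y : X => act y b) := by
    have : Continuous (fun y : X => ((y, b) : X × G)) := by fun_prop
    exact hact_cont.comp_continuous this (fun y => ⟨trivial, hbP⟩)
  set R : Set X := (fun y : X => act y b) '' Set.univ with hRdef
  have hRclosed : IsClosed R := (isCompact_univ.image hbcont).isClosed
  -- F (x', g') = act x' (g' * b), continuous on X × W
  set F : X × G → X := fun q => act q.1 (q.2 * b) with hFdef
  have hFcont : ContinuousOn F (Set.univ ×ˢ W) := by
    have hc : Continuous (fun q : X × G => ((q.1, q.2 * b) : X × G)) := by fun_prop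
    have : Set.MapsTo (fun q : X × G => ((q.1, q.2 * b) : X × G))
        (Set.univ ×ˢ W) (Set.univ ×ˢ P) := by
      rintro ⟨x', g'⟩ ⟨-, hg'⟩
      exact ⟨trivial, hg'⟩
    exact hact_cont.comp hc.continuousOn this
  set S : Set (X × G) := (Set.univ ×ˢ W) ∩ F ⁻¹' R with hSdef
  have hSclosed : IsClosed S :=
    hFcont.preimage_isClosed_of_isClosed (isClosed_univ.prod hWclosed) hRclosed
  -- On X × V, 𝒢 ⊆ S
  have hGS : 𝒢 ∩ (Set.univ ×ˢ V) ⊆ S := by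
    rintro ⟨x', g'⟩ ⟨hmem, -, hg'V⟩
    rw [h𝒢] at hmem
    rcases hmem with ⟨a', ha', b', hb', y, hgeq, hxy⟩
    have hg'bP : g' * b ∈ P := interior_subset hg'V
    have hdecomp : a' * b'⁻¹ = (g' * b) * b⁻¹ := by rw [← hgeq]; group
    have := key x' y a' ha' b' hb' (g' * b) hg'bP b hbP hdecomp hxy
    exact ⟨⟨trivial, hg'bP⟩, ⟨y, trivial, this.symm⟩⟩
  -- Conclude
  have hxgS : (x, g) ∈ S := by
    have h1 : (x, g) ∈ (Set.univ ×ˢ V) ∩ closure 𝒢 :=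
      ⟨⟨trivial, hgV⟩, hxg⟩
    have h2 : (x, g) ∈ closure ((Set.univ ×ˢ V) ∩ 𝒢) :=
      (isOpen_univ.prod hVopen).inter_closure h1
    have h3 : closure ((Set.univ ×ˢ V) ∩ 𝒢) ⊆ closure S := by
      apply closure_mono
      intro q hq
      exact hGS ⟨hq.2, hq.1⟩
    rw [hSclosed.closure_eq] at h3
    exact h3 h2
  rcases hxgS with ⟨⟨-, hgbP⟩, y, -, hy⟩
  rw [h𝒢]
  refine ⟨g * b, hgbP, b, hbP, y, by group, hy.symm⟩
end

section
/- With P, G, X, 𝒢 as above, if (x,g), (y,h) ∈ 𝒢 with y = s(x,g), then (x, gh) ∈ 𝒢. Consequently 𝒢 with multiplication (x,g)(s(x,g),h) = (x,gh) and inversion (x,g)⁻¹ = (s(x,g), g⁻¹) is a groupoid. -/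
open Pointwise

/-- If `(x,g), (y,h) ∈ 𝒢` with `y = s(x,g)`, then `(x, gh) ∈ 𝒢`; hence `𝒢` is closed under
the groupoid multiplication `(x,g)(s(x,g),h) = (x,gh)`. -/
theorem stmt11 {G : Type*} [Group G] [TopologicalSpace G] [IsTopologicalGroup G]
    [LocallyCompactSpace G] [T2Space G] [SecondCountableTopology G]
    (P : Set G) (hP_closed : IsClosed P) (hP_one : (1 : G) ∈ P)
    (hP_mul : ∀ a ∈ P, ∀ b ∈ P, a * b ∈ P)
    (hOre : P * P⁻¹ = Set.univ)
    (hP_dense : P ⊆ closure (interior P))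
    {X : Type*} [TopologicalSpace X] [CompactSpace X] [T2Space X]
    (act : X → G → X)
    (hact_cont : ContinuousOn (fun p : X × G => act p.1 p.2) (Set.univ ×ˢ P))
    (hact_one : ∀ x, act x 1 = x)
    (hact_mul : ∀ x, ∀ a ∈ P, ∀ b ∈ P, act (act x a) b = act x (a * b))
    (hact_inj : ∀ a ∈ P, Function.Injective (fun x => act x a))
    (𝒢 : Set (X × G))
    (h𝒢 : 𝒢 = {p : X × G | ∃ a ∈ P, ∃ b ∈ P, ∃ y : X,
        p.2 = a * b⁻¹ ∧ act p.1 a = act y b})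
    (x y : X) (g h : G) (hxg : (x, g) ∈ 𝒢) (hyh : (y, h) ∈ 𝒢)
    (hs : ∃ a ∈ P, ∃ b ∈ P, g = a * b⁻¹ ∧ act x a = act y b) :
    (x, g * h) ∈ 𝒢 := by
  obtain ⟨a, ha, b, hb, hg, hxa⟩ := hs
  rw [h𝒢] at hyh ⊢
  obtain ⟨c, hc, d, hd, z, hh, hyc⟩ := hyh
  dsimp only at hh hyc
  -- Ore: b⁻¹ * c = u * v⁻¹ for some u v ∈ P
  have : b⁻¹ * c ∈ P * P⁻¹ := by rw [hOre]; trivial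
  obtain ⟨u, hu, v', hv', huv⟩ := this
  dsimp only at huv
  obtain ⟨v, hv, rfl⟩ : ∃ v ∈ P, v' = v⁻¹ := ⟨v'⁻¹, hv', by simp⟩
  have hcv : c * v = b * u := by
    have : c = b * (u * v⁻¹) := by rw [huv]; group
    rw [this]; group
  refine ⟨a * u, hP_mul a ha u hu, d * v, hP_mul d hd v hv, z, ?_, ?_⟩
  · show g * h = a * u * (d * v)⁻¹
    have e : a * u * (d * v)⁻¹ = a * (u * v⁻¹) * d⁻¹ := by group
    rw [hg, hh, e, huv]; group
  · calc act x (a * u) = act (act x a) u := (hact_mul x a ha u hu).symm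
      _ = act (act y b) u := by rw [hxa]
      _ = act y (b * u) := hact_mul y b hb u hu
      _ = act y (c * v) := by rw [hcv]
      _ = act (act y c) v := (hact_mul y c hc v hv).symm
      _ = act (act z d) v := by rw [hyc]
      _ = act z (d * v) := hact_mul z d hd v hv
end

section
/- With P, G, X, 𝒢 as above, define Q_x := {g ∈ G : (x,g) ∈ 𝒢} for x ∈ X. Then Q_x is a closed subset of G satisfying Q_x · P ⊆ Q_x; hence the interior of Q_x is dense in Q_x and its boundary has Haar measure zero. -/
open Pointwise MeasureTheory Topology

/-- For `x ∈ X`, the set `Q_x = {g : (x,g) ∈ 𝒢}` is closed, satisfies `Q_x P ⊆ Q_x`; hence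
its interior is dense in it and its boundary has Haar measure zero. -/
theorem stmt12 {G : Type*} [Group G] [TopologicalSpace G] [IsTopologicalGroup G]
    [LocallyCompactSpace G] [T2Space G] [SecondCountableTopology G]
    [MeasurableSpace G] [BorelSpace G]
    (μ : Measure G) [μ.IsHaarMeasure]
    (P : Set G) (hP_closed : IsClosed P) (hP_one : (1 : G) ∈ P)
    (hP_mul : ∀ a ∈ P, ∀ b ∈ P, a * b ∈ P)
    (hOre : P * P⁻¹ = Set.univ)
    (hP_dense : P ⊆ closure (interior P))
    {X : Type*} [TopologicalSpace X] [CompactSpace X] [T2Space X]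
    (act : X → G → X)
    (hact_cont : ContinuousOn (fun p : X × G => act p.1 p.2) (Set.univ ×ˢ P))
    (hact_one : ∀ x, act x 1 = x)
    (hact_mul : ∀ x, ∀ a ∈ P, ∀ b ∈ P, act (act x a) b = act x (a * b))
    (hact_inj : ∀ a ∈ P, Function.Injective (fun x => act x a))
    (𝒢 : Set (X × G))
    (h𝒢 : 𝒢 = {p : X × G | ∃ a ∈ P, ∃ b ∈ P, ∃ y : X,
        p.2 = a * b⁻¹ ∧ act p.1 a = act y b})
    (x : X) (Q : Set G) (hQ : Q = {g : G | (x, g) ∈ 𝒢}) :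
    IsClosed Q ∧ Q * P ⊆ Q ∧ Q ⊆ closure (interior Q) ∧ μ (frontier Q) = 0 := by
  subst h𝒢
  subst hQ
  set Q : Set G := {g : G | ∃ a ∈ P, ∃ b ∈ P, ∃ y : X, g = a * b⁻¹ ∧ act x a = act y b}
    with hQdef
  have hQQ : {g : G | (x, g) ∈ {p : X × G | ∃ a ∈ P, ∃ b ∈ P, ∃ y : X,
      p.2 = a * b⁻¹ ∧ act p.1 a = act y b}} = Q := rfl
  rw [hQQ]
  have hPP : ∀ {a b : G}, a ∈ P → b ∈ P → a * b ∈ P := fun ha hb => hP_mul _ ha _ hb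
  have hPint : P * interior P ⊆ interior P := by
    refine interior_maximal ?_ (IsOpen.mul_left isOpen_interior)
    rintro z hz
    rcases Set.mem_mul.1 hz with ⟨a, ha, b, hb, rfl⟩
    exact hPP ha (interior_subset hb)
  have h1cl : (1 : G) ∈ closure (interior P) := hP_dense hP_one
  have hOre' : ∀ g : G, ∃ c ∈ P, ∃ d ∈ P, g = c * d⁻¹ := by
    intro g
    have : g ∈ P * P⁻¹ := by rw [hOre]; trivial
    rcases Set.mem_mul.1 this with ⟨c, hc, d', hd', hcd⟩
    exact ⟨c, hc, d'⁻¹, Set.mem_inv.1 hd', by rw [inv_inv]; exact hcd.symm⟩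
  -- `Q * P ⊆ Q`
  have hQP : Q * P ⊆ Q := by
    rintro z hz
    rcases Set.mem_mul.1 hz with ⟨g, hg, p, hp, rfl⟩
    rcases hg with ⟨a, ha, b, hb, y, rfl, hxy⟩
    rcases hOre' (b⁻¹ * p) with ⟨c, hc, d, hd, hcd⟩
    have hbc : b * c = p * d := by
      have h := congrArg (fun z => b * z * d) hcd
      simpa [mul_assoc] using h.symm
    refine ⟨a * c, hPP ha hc, d, hd, act y p, ?_, ?_⟩
    · rw [mul_assoc a b⁻¹ p, hcd, ← mul_assoc]
    · calc act x (a * c) = act (act x a) c := (hact_mul x a ha c hc).symm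
        _ = act (act y b) c := by rw [hxy]
        _ = act y (b * c) := hact_mul y b hb c hc
        _ = act y (p * d) := by rw [hbc]
        _ = act (act y p) d := (hact_mul y p hp d hd).symm
  -- the "common denominator" property of elements of `Q`
  have hforall : ∀ g ∈ Q, ∀ b ∈ P, g * b ∈ P → ∃ y, act x (g * b) = act y b := by
    rintro g ⟨a₀, ha₀, b₀, hb₀, y₀, rfl, hxy⟩ b hb hgb
    rcases hOre' (b⁻¹ * b₀) with ⟨e, he, c, hc, hec⟩
    have hb₀c : b₀ * c = b * e := by
      have h := congrArg (fun z => b * z * c) hec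
      simpa [mul_assoc] using h
    have key : act (act x (a₀ * b₀⁻¹ * b)) e = act (act y₀ b) e := by
      calc act (act x (a₀ * b₀⁻¹ * b)) e = act x (a₀ * b₀⁻¹ * b * e) :=
            hact_mul x _ hgb e he
        _ = act x (a₀ * c) := by
            rw [mul_assoc (a₀ * b₀⁻¹) b e, ← hb₀c, mul_assoc, inv_mul_cancel_left]
        _ = act (act x a₀) c := (hact_mul x a₀ ha₀ c hc).symm
        _ = act (act y₀ b₀) c := by rw [hxy]
        _ = act y₀ (b₀ * c) := hact_mul y₀ b₀ hb₀ c hc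
        _ = act y₀ (b * e) := by rw [hb₀c]
        _ = act (act y₀ b) e := (hact_mul y₀ b hb e he).symm
    exact ⟨y₀, hact_inj e he key⟩
  obtain ⟨u, hu⟩ : (interior P).Nonempty := by
    by_contra h
    rw [Set.not_nonempty_iff_eq_empty] at h
    rw [h, closure_empty] at h1cl
    exact h1cl
  have hexb : ∀ g : G, ∃ b ∈ P, g * b ∈ interior P := by
    intro g
    rcases hOre' g with ⟨p, hp, q, hq, rfl⟩
    refine ⟨q * u, hPP hq (interior_subset hu), ?_⟩
    have h : p * q⁻¹ * (q * u) = p * u := by group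
    rw [h]
    exact hPint (Set.mul_mem_mul hp hu)
  -- closedness
  have hQclosed : IsClosed Q := by
    apply isClosed_of_closure_subset
    intro g hg
    obtain ⟨b, hbP, hgb⟩ := hexb g
    have hUopen : IsOpen ((fun h : G => h * b) ⁻¹' interior P) :=
      isOpen_interior.preimage (continuous_mul_right b)
    have hgU : g ∈ (fun h : G => h * b) ⁻¹' interior P := hgb
    have hgcl : g ∈ closure (((fun h : G => h * b) ⁻¹' interior P) ∩ Q) :=
      hUopen.inter_closure ⟨hgU, hg⟩
    have hfc : ContinuousOn (fun h : G => act x (h * b))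
        ((fun h : G => h * b) ⁻¹' interior P) := by
      have hmap : Set.MapsTo (fun h : G => ((x, h * b) : X × G))
          ((fun h : G => h * b) ⁻¹' interior P) (Set.univ ×ˢ P) :=
        fun h hh => ⟨Set.mem_univ _, interior_subset hh⟩
      exact hact_cont.comp
        ((continuous_const.prodMk (continuous_mul_right b)).continuousOn) hmap
    have hYcont : Continuous (fun y : X => act y b) := by
      rw [← continuousOn_univ]
      have hmap : Set.MapsTo (fun y : X => ((y, b) : X × G)) Set.univ (Set.univ ×ˢ P) :=
        fun y _ => ⟨Set.mem_univ _, hbP⟩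
      exact hact_cont.comp ((continuous_id.prodMk continuous_const).continuousOn) hmap
    have hYcomp : IsCompact ((fun y : X => act y b) '' Set.univ) :=
      isCompact_univ.image hYcont
    have himg : (fun h : G => act x (h * b)) '' (((fun h : G => h * b) ⁻¹' interior P) ∩ Q)
        ⊆ (fun y : X => act y b) '' Set.univ := by
      rintro _ ⟨h, ⟨hhU, hhQ⟩, rfl⟩
      obtain ⟨y, hy⟩ := hforall h hhQ b hbP (interior_subset hhU)
      exact ⟨y, Set.mem_univ _, hy.symm⟩
    have hmem : act x (g * b) ∈ (fun y : X => act y b) '' Set.univ := by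
      have h1 : act x (g * b) ∈ closure ((fun h : G => act x (h * b)) ''
          (((fun h : G => h * b) ⁻¹' interior P) ∩ Q)) :=
        ((hfc.continuousAt (hUopen.mem_nhds hgU)).continuousWithinAt).mem_closure_image hgcl
      have h2 := (closure_mono himg) h1
      rwa [hYcomp.isClosed.closure_eq] at h2
    obtain ⟨y, -, hy⟩ := hmem
    exact ⟨g * b, interior_subset hgb, b, hbP, y, (mul_inv_cancel_right g b).symm, hy.symm⟩
  -- `Q * interior P ⊆ interior Q`
  have hQint : Q * interior P ⊆ interior Q := by
    refine interior_maximal ?_ (IsOpen.mul_left isOpen_interior)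
    rintro z hz
    rcases Set.mem_mul.1 hz with ⟨q, hq, w, hw, rfl⟩
    exact hQP (Set.mul_mem_mul hq (interior_subset hw))
  -- density of the interior
  have hQdense : Q ⊆ closure (interior Q) := by
    intro g hgQ
    have himg := (Homeomorph.mulLeft g).image_closure (interior P)
    have h1 : g ∈ (Homeomorph.mulLeft g) '' closure (interior P) := ⟨1, h1cl, by simp⟩
    rw [himg] at h1
    refine closure_mono ?_ h1
    rintro _ ⟨w, hw, rfl⟩
    exact hQint (Set.mul_mem_mul hgQ hw)
  -- boundary has measure zero
  have hFR : frontier Q = Q \ interior Q := hQclosed.frontier_eq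
  have hμF : μ (frontier Q) = 0 := by
    by_contra hμF
    obtain ⟨n, hn⟩ : ∃ n, μ (frontier Q ∩ compactCovering G n) ≠ 0 := by
      by_contra h
      push_neg at h
      apply hμF
      have hcov : frontier Q = ⋃ n, frontier Q ∩ compactCovering G n := by
        rw [← Set.inter_iUnion, iUnion_compactCovering, Set.inter_univ]
      rw [hcov]
      exact measure_iUnion_null h
    set K := frontier Q ∩ compactCovering G n with hK
    have hKcomp : IsCompact K := (isCompact_compactCovering G n).inter_left isClosed_frontier
    have hKF : K ⊆ frontier Q := Set.inter_subset_left
    have hKmeas : MeasurableSet K := hKcomp.isClosed.measurableSet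
    have hK0 : 0 < μ K := pos_iff_ne_zero.mpr hn
    have hKtop : μ K ≠ ⊤ := hKcomp.measure_lt_top.ne
    have K₀ : TopologicalSpace.PositiveCompacts G := Classical.arbitrary _
    haveI hReg : μ.Regular := Measure.regular_of_isMulLeftInvariant K₀.isCompact
      K₀.interior_nonempty K₀.isCompact.measure_lt_top.ne
    obtain ⟨O, hKO, hOopen, hOlt⟩ :=
      K.exists_isOpen_lt_of_lt (μ K + μ K) (ENNReal.lt_add_right hKtop hK0.ne')
    obtain ⟨V, hV1, hKV⟩ := compact_open_separated_mul_right hKcomp hOopen hKO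
    have hW : V ∩ V⁻¹ ∈ 𝓝 (1 : G) := Filter.inter_mem hV1 (inv_mem_nhds_one G hV1)
    obtain ⟨v, hvW, hvP⟩ : ∃ v, v ∈ V ∩ V⁻¹ ∧ v ∈ interior P := by
      rcases mem_closure_iff_nhds.1 h1cl _ hW with ⟨v, hv1, hv2⟩
      exact ⟨v, hv1, hv2⟩
    have hvV : v ∈ V := hvW.1
    have hvinvV : v⁻¹ ∈ V := Set.mem_inv.1 hvW.2
    -- compactness of preimages under right translations
    have hpre_comp : ∀ (w : G) (C : Set G), IsCompact C →
        IsCompact ((fun g : G => g * w) ⁻¹' C) := by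
      intro w C hC
      have h : (fun g : G => g * w) ⁻¹' C = (fun c : G => c * w⁻¹) '' C := by
        ext g
        constructor
        · intro h; exact ⟨g * w, h, by group⟩
        · rintro ⟨c, hc, rfl⟩; simpa using hc
      rw [h]
      exact hC.image (continuous_mul_right w⁻¹)
    -- the translated measure
    haveI : IsFiniteMeasureOnCompacts (Measure.map (fun g : G => g * v⁻¹) μ) := by
      constructor
      intro C hC
      rw [Measure.map_apply (measurable_mul_const v⁻¹) hC.isClosed.measurableSet]
      exact (hpre_comp v⁻¹ C hC).measure_lt_top
    have hB0 : μ (K₀ : Set G) ≠ 0 :=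
      (Measure.measure_pos_of_nonempty_interior μ K₀.interior_nonempty).ne'
    have hBtop : μ (K₀ : Set G) ≠ ⊤ := K₀.isCompact.measure_lt_top.ne
    have hcross : ∀ S : Set G, MeasurableSet S →
        μ ((fun g : G => g * v⁻¹) ⁻¹' S) * μ (K₀ : Set G)
          = μ S * (Measure.map (fun g : G => g * v⁻¹) μ) (K₀ : Set G) := by
      intro S hS
      have h1 := Measure.haarMeasure_unique (Measure.map (fun g : G => g * v⁻¹) μ) K₀
      have h2 := Measure.haarMeasure_unique μ K₀
      have hm1 : (Measure.map (fun g : G => g * v⁻¹) μ) S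
          = (Measure.map (fun g : G => g * v⁻¹) μ) (K₀ : Set G) * Measure.haarMeasure K₀ S := by
        conv_lhs => rw [h1]
        simp [Measure.smul_apply, smul_eq_mul]
      have hm2 : μ S = μ (K₀ : Set G) * Measure.haarMeasure K₀ S := by
        conv_lhs => rw [h2]
        simp [Measure.smul_apply, smul_eq_mul]
      rw [← Measure.map_apply (measurable_mul_const v⁻¹) hS, hm1, hm2]
      ring
    -- `A` is nonzero and finite
    have hK₀meas : MeasurableSet (K₀ : Set G) := K₀.isCompact.isClosed.measurableSet
    have hA_eq : (Measure.map (fun g : G => g * v⁻¹) μ) (K₀ : Set G)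
        = μ ((fun g : G => g * v⁻¹) ⁻¹' (K₀ : Set G)) :=
      Measure.map_apply (measurable_mul_const v⁻¹) hK₀meas
    obtain ⟨z, hz⟩ := K₀.interior_nonempty
    have hzmem : z * v ∈ interior ((fun g : G => g * v⁻¹) ⁻¹' (K₀ : Set G)) := by
      have hsub : ((fun g : G => g * v⁻¹) ⁻¹' interior (K₀ : Set G))
          ⊆ interior ((fun g : G => g * v⁻¹) ⁻¹' (K₀ : Set G)) :=
        interior_maximal (Set.preimage_mono interior_subset)
          (isOpen_interior.preimage (continuous_mul_right v⁻¹))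
      apply hsub
      show z * v * v⁻¹ ∈ interior (K₀ : Set G)
      simpa using hz
    have hA0 : (Measure.map (fun g : G => g * v⁻¹) μ) (K₀ : Set G) ≠ 0 := by
      rw [hA_eq]
      exact (Measure.measure_pos_of_nonempty_interior μ ⟨z * v, hzmem⟩).ne'
    have hAtop : (Measure.map (fun g : G => g * v⁻¹) μ) (K₀ : Set G) ≠ ⊤ := by
      rw [hA_eq]
      exact (hpre_comp v⁻¹ (K₀ : Set G) K₀.isCompact).measure_lt_top.ne
    -- the two translates of K
    have hKvmeas : MeasurableSet ((fun g : G => g * v⁻¹) ⁻¹' K) :=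
      hKmeas.preimage (measurable_mul_const v⁻¹)
    have hKv'meas : MeasurableSet ((fun g : G => g * v) ⁻¹' K) :=
      hKmeas.preimage (measurable_mul_const v)
    have hcross1 := hcross K hKmeas
    have hcross2 : μ K * μ (K₀ : Set G)
        = μ ((fun g : G => g * v) ⁻¹' K) * (Measure.map (fun g : G => g * v⁻¹) μ) (K₀ : Set G) := by
      have h := hcross ((fun g : G => g * v) ⁻¹' K) hKv'meas
      have hpre : (fun g : G => g * v⁻¹) ⁻¹' ((fun g : G => g * v) ⁻¹' K) = K := by
        ext g
        show g * v⁻¹ * v ∈ K ↔ g ∈ K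
        rw [inv_mul_cancel_right]
      rwa [hpre] at h
    -- select the good translate
    have hmain : ∃ S : Set G, MeasurableSet S ∧ S ⊆ O ∧ Disjoint K S ∧ μ K ≤ μ S := by
      rcases le_total (μ (K₀ : Set G)) ((Measure.map (fun g : G => g * v⁻¹) μ) (K₀ : Set G))
        with hle | hle
      · refine ⟨(fun g : G => g * v⁻¹) ⁻¹' K, hKvmeas, ?_, ?_, ?_⟩
        · intro g hg
          apply hKV
          exact ⟨g * v⁻¹, hg, v, hvV, inv_mul_cancel_right g v⟩
        · rw [Set.disjoint_left]
          intro g hgK hgKv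
          have hgF : g ∈ Q \ interior Q := by rw [← hFR]; exact hKF hgK
          have hgQ : g * v⁻¹ ∈ Q := by
            have h := hKF hgKv
            rw [hFR] at h
            exact h.1
          have : g ∈ interior Q := by
            have h := hQint (Set.mul_mem_mul hgQ hvP)
            rwa [inv_mul_cancel_right] at h
          exact hgF.2 this
        · have h1 : μ K * μ (K₀ : Set G) ≤ μ ((fun g : G => g * v⁻¹) ⁻¹' K) * μ (K₀ : Set G) := by
            calc μ K * μ (K₀ : Set G)
                ≤ μ K * (Measure.map (fun g : G => g * v⁻¹) μ) (K₀ : Set G) :=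
                  mul_le_mul_right hle _
              _ = μ ((fun g : G => g * v⁻¹) ⁻¹' K) * μ (K₀ : Set G) := hcross1.symm
          exact (ENNReal.mul_le_mul_iff_left hB0 hBtop).1 h1
      · refine ⟨(fun g : G => g * v) ⁻¹' K, hKv'meas, ?_, ?_, ?_⟩
        · intro g hg
          apply hKV
          exact ⟨g * v, hg, v⁻¹, hvinvV, mul_inv_cancel_right g v⟩
        · rw [Set.disjoint_left]
          intro g hgK hgKv
          have hgF : g * v ∈ Q \ interior Q := by rw [← hFR]; exact hKF hgKv
          have hgQ : g ∈ Q := by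
            have h := hKF hgK
            rw [hFR] at h
            exact h.1
          exact hgF.2 (hQint (Set.mul_mem_mul hgQ hvP))
        · have h1 : μ K * (Measure.map (fun g : G => g * v⁻¹) μ) (K₀ : Set G)
              ≤ μ ((fun g : G => g * v) ⁻¹' K)
                * (Measure.map (fun g : G => g * v⁻¹) μ) (K₀ : Set G) := by
            calc μ K * (Measure.map (fun g : G => g * v⁻¹) μ) (K₀ : Set G)
                ≤ μ K * μ (K₀ : Set G) := mul_le_mul_right hle _
              _ = μ ((fun g : G => g * v) ⁻¹' K)
                  * (Measure.map (fun g : G => g * v⁻¹) μ) (K₀ : Set G) := hcross2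
          exact (ENNReal.mul_le_mul_iff_left hA0 hAtop).1 h1
    obtain ⟨S, hSmeas, hSO, hSdisj, hSle⟩ := hmain
    have hunion : μ K + μ S ≤ μ O := by
      rw [← measure_union hSdisj hSmeas]
      exact measure_mono (Set.union_subset hKO hSO)
    have hcontra : μ K + μ K ≤ μ O := le_trans (add_le_add_right hSle _) hunion
    exact absurd (lt_of_le_of_lt hcontra hOlt) (lt_irrefl _)
  exact ⟨hQclosed, hQP, hQdense, hμF⟩
end

section
/- Let P be a closed Ore subsemigroup of a locally compact group G acting injectively and continuously on a compact Hausdorff space X, and suppose the groupoid 𝒢 = X ⋊ P has a left Haar system. Then the map X → 𝒞(G) sending x to Q_x is continuous, where 𝒞(G) is the space of closed subsets of G with the Vietoris topology. -/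
open Pointwise

/-- The topology on the hyperspace of closed subsets of a locally compact space used in the
paper (called the Vietoris topology there, also known as the Fell/Chabauty topology), with
subbasic open sets `{A : A ∩ K = ∅}` for `K` compact and `{A : A ∩ U ≠ ∅}` for `U` open. -/
def fellTopology (G : Type*) [TopologicalSpace G] : TopologicalSpace (Set G) :=
  TopologicalSpace.generateFrom
    ({S | ∃ K : Set G, IsCompact K ∧ S = {A : Set G | A ∩ K = ∅}} ∪
     {S | ∃ U : Set G, IsOpen U ∧ S = {A : Set G | (A ∩ U).Nonempty}})

/-- If the groupoid `𝒢 = X ⋊ P` has a left Haar system (equivalently, the action map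
`X × Int(P) → X` is open), then `x ↦ Q_x` is continuous into the space of closed subsets
of `G` with the Vietoris (Fell) topology. -/
theorem stmt14 {G : Type*} [Group G] [TopologicalSpace G] [IsTopologicalGroup G]
    [LocallyCompactSpace G] [T2Space G] [SecondCountableTopology G]
    (P : Set G) (hP_closed : IsClosed P) (hP_one : (1 : G) ∈ P)
    (hP_mul : ∀ a ∈ P, ∀ b ∈ P, a * b ∈ P)
    (hOre : P * P⁻¹ = Set.univ)
    (hP_dense : P ⊆ closure (interior P))
    {X : Type*} [TopologicalSpace X] [CompactSpace X] [T2Space X]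
    (act : X → G → X)
    (hact_cont : ContinuousOn (fun p : X × G => act p.1 p.2) (Set.univ ×ˢ P))
    (hact_one : ∀ x, act x 1 = x)
    (hact_mul : ∀ x, ∀ a ∈ P, ∀ b ∈ P, act (act x a) b = act x (a * b))
    (hact_inj : ∀ a ∈ P, Function.Injective (fun x => act x a))
    (hopen : ∀ V : Set (X × G), IsOpen V →
      IsOpen ((fun p : X × G => act p.1 p.2) '' (V ∩ Set.univ ×ˢ interior P)))
    (𝒢 : Set (X × G))
    (h𝒢 : 𝒢 = {p : X × G | ∃ a ∈ P, ∃ b ∈ P, ∃ y : X,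
        p.2 = a * b⁻¹ ∧ act p.1 a = act y b})
    (Q : X → Set G) (hQ : ∀ z, Q z = {g : G | (z, g) ∈ 𝒢}) :
    @Continuous X (Set G) _ (fellTopology G) Q := by
  classical
  -- the interior of `P` is nonempty
  have hIntP_ne : (interior P).Nonempty := by
    by_contra h
    rw [Set.not_nonempty_iff_eq_empty] at h
    have h1 := hP_dense hP_one
    rw [h, closure_empty] at h1
    exact h1
  obtain ⟨u, hu⟩ := hIntP_ne
  -- `P · Int P ⊆ Int P`
  have hPI : ∀ a ∈ P, ∀ b ∈ interior P, a * b ∈ interior P := by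
    intro a ha b hb
    have hsub : a • interior P ⊆ P := by
      rintro z ⟨w, hw, rfl⟩
      exact hP_mul a ha w (interior_subset hw)
    have hop : IsOpen (a • interior P) := isOpen_interior.smul a
    exact interior_maximal hsub hop ⟨b, hb, rfl⟩
  -- `Int P · P ⊆ Int P`
  have hIP : ∀ a ∈ interior P, ∀ b ∈ P, a * b ∈ interior P := by
    intro a ha b hb
    have hsub : (fun z => z * b) '' interior P ⊆ P := by
      rintro z ⟨w, hw, rfl⟩
      exact hP_mul w (interior_subset hw) b hb
    have hop : IsOpen ((fun z => z * b) '' interior P) :=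
      (Homeomorph.mulRight b).isOpenMap _ isOpen_interior
    exact interior_maximal hsub hop ⟨a, ha, rfl⟩
  -- Ore decomposition
  have hdec : ∀ g : G, ∃ a ∈ P, ∃ b ∈ P, g = a * b⁻¹ := by
    intro g
    have hg : g ∈ P * P⁻¹ := by rw [hOre]; trivial
    obtain ⟨a, ha, c, hc, rfl⟩ := hg
    exact ⟨a, ha, c⁻¹, by simpa using hc, by simp⟩
  -- Ore decomposition with interior witnesses
  have hdec_int : ∀ g : G, ∃ a ∈ interior P, ∃ b ∈ interior P, g = a * b⁻¹ := by
    intro g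
    obtain ⟨a, ha, b, hb, rfl⟩ := hdec g
    refine ⟨a * u, hPI a ha u hu, b * u, hPI b hb u hu, ?_⟩
    group
  -- common right multiples
  have hcm : ∀ b ∈ P, ∀ b' ∈ P, ∃ p ∈ P, ∃ q ∈ P, b * p = b' * q := by
    intro b hb b' hb'
    obtain ⟨p, hp, q, hq, h⟩ := hdec (b⁻¹ * b')
    refine ⟨p, hp, q, hq, ?_⟩
    have : b * (b⁻¹ * b') * q = b * (p * q⁻¹) * q := by rw [← h]
    calc b * p = b * (p * q⁻¹) * q := by group
    _ = b * (b⁻¹ * b') * q := by rw [← h]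
    _ = b' * q := by group
  -- continuity of `x ↦ act x a` for `a ∈ P`
  have hact_cont1 : ∀ a ∈ P, Continuous fun x => act x a := by
    intro a ha
    exact hact_cont.comp_continuous (continuous_id.prodMk continuous_const)
      fun x => ⟨trivial, ha⟩
  -- the range of `y ↦ act y b` is closed
  have hF : ∀ b ∈ P, IsClosed (Set.range fun y => act y b) := by
    intro b hb
    exact (isCompact_range (hact_cont1 b hb)).isClosed
  -- well-definedness: the existence of `y` does not depend on the Ore decomposition
  have hwd : ∀ (x y : X) (g : G), ∀ a ∈ P, ∀ b ∈ P, ∀ a' ∈ P, ∀ b' ∈ P,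
      g = a * b⁻¹ → g = a' * b'⁻¹ → act x a = act y b → ∃ y', act x a' = act y' b' := by
    intro x y g a ha b hb a' ha' b' hb' hg hg' hxy
    obtain ⟨p, hp, q, hq, hpq⟩ := hcm b hb b' hb'
    have hA : a = g * b := by rw [hg]; group
    have hA' : a' = g * b' := by rw [hg']; group
    have hkey : a' * q = a * p := by
      calc a' * q = g * (b' * q) := by rw [hA']; group
      _ = g * (b * p) := by rw [hpq]
      _ = a * p := by rw [hA]; group
    have h1 : act (act x a') q = act (act y b') q := by
      rw [hact_mul x a' ha' q hq, hact_mul y b' hb' q hq, hkey, ← hpq,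
        ← hact_mul x a ha p hp, ← hact_mul y b hb p hp, hxy]
    exact ⟨y, hact_inj q hq h1⟩
  -- membership criterion for 𝒢
  have hmem : ∀ (x : X) (g : G), ∀ a ∈ P, ∀ b ∈ P, g = a * b⁻¹ →
      ((x, g) ∈ 𝒢 ↔ ∃ y, act x a = act y b) := by
    intro x g a ha b hb hg
    constructor
    · intro hx
      rw [h𝒢] at hx
      obtain ⟨a', ha', b', hb', y, hg', hxy⟩ := hx
      exact hwd x y g a' ha' b' hb' a ha b hb hg' hg hxy
    · rintro ⟨y, hy⟩
      rw [h𝒢]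
      exact ⟨a, ha, b, hb, y, hg, hy⟩
  -- 𝒢 is closed
  have h𝒢closed : IsClosed 𝒢 := by
    rw [← isOpen_compl_iff, isOpen_iff_mem_nhds]
    rintro ⟨x, g⟩ hxg
    obtain ⟨a, ha, b, hb, hg⟩ := hdec_int g
    have hgb : g * b = a := by rw [hg]; group
    -- the open set where `g' * b ∈ Int P`
    set Ω : Set (X × G) := {p : X × G | p.2 * b ∈ interior P} with hΩ
    have hΩopen : IsOpen Ω :=
      isOpen_interior.preimage ((continuous_snd.mul continuous_const))
    have hxgΩ : (x, g) ∈ Ω := by simpa [hΩ, hgb] using ha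
    -- the map `p ↦ act p.1 (p.2 * b)`, continuous on Ω
    set f : X × G → X := fun p => act p.1 (p.2 * b) with hf
    have hfc : ContinuousOn f Ω := by
      have hc2 : Continuous fun p : X × G => (p.1, p.2 * b) :=
        continuous_fst.prodMk (continuous_snd.mul continuous_const)
      exact hact_cont.comp hc2.continuousOn
        fun p hp => ⟨trivial, interior_subset hp⟩
    have hnotin : f (x, g) ∉ Set.range fun y => act y b := by
      rintro ⟨y, hy⟩
      exact hxg ((hmem x g (g * b) (by simpa [hgb] using interior_subset ha) b
        (interior_subset hb) (by group)).mpr ⟨y, hy.symm⟩)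
    have hN : IsOpen (Ω ∩ f ⁻¹' (Set.range fun y => act y b)ᶜ) :=
      hfc.isOpen_inter_preimage hΩopen (hF b (interior_subset hb)).isOpen_compl
    refine Filter.mem_of_superset (hN.mem_nhds ⟨hxgΩ, hnotin⟩) ?_
    rintro ⟨x', g'⟩ ⟨hΩ', hfp⟩ hmem'
    have hg'b : g' * b ∈ P := interior_subset hΩ'
    obtain ⟨y', hy'⟩ := (hmem x' g' (g' * b) hg'b b (interior_subset hb)
      (by group)).mp hmem'
    exact hfp ⟨y', hy'.symm⟩
  -- main proof
  rw [fellTopology, continuous_generateFrom_iff]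
  rintro s (⟨K, hK, rfl⟩ | ⟨U, hU, rfl⟩)
  · -- preimage of `{A | A ∩ K = ∅}` is the complement of a compact set
    have hcomp : IsCompact (Prod.fst '' (𝒢 ∩ Set.univ ×ˢ K)) :=
      (((isCompact_univ.prod hK).inter_left h𝒢closed).image continuous_fst)
    have heq : Q ⁻¹' {A : Set G | A ∩ K = ∅} = (Prod.fst '' (𝒢 ∩ Set.univ ×ˢ K))ᶜ := by
      ext x
      simp only [Set.mem_preimage, Set.mem_setOf_eq, Set.mem_compl_iff, Set.mem_image,
        Set.mem_inter_iff, Set.mem_prod, Set.mem_univ, true_and, hQ,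
        Set.eq_empty_iff_forall_notMem, Set.mem_inter_iff, Set.mem_setOf_eq, not_exists]
      constructor
      · rintro h ⟨x', g⟩ ⟨⟨h1, h2⟩, rfl⟩
        exact h g ⟨h1, h2⟩
      · rintro h g ⟨h1, h2⟩
        exact h (x, g) ⟨⟨h1, h2⟩, rfl⟩
    rw [heq]
    exact hcomp.isClosed.isOpen_compl
  · -- preimage of `{A | (A ∩ U).Nonempty}` is open: this uses the open action map
    rw [isOpen_iff_mem_nhds]
    intro x hx
    obtain ⟨g, hgQ, hgU⟩ := hx
    rw [hQ] at hgQ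
    obtain ⟨a, ha, b, hb, hg⟩ := hdec_int g
    obtain ⟨y, hy⟩ := (hmem x g a (interior_subset ha) b (interior_subset hb) hg).mp hgQ
    -- W : open neighborhood of b inside Int P such that a * b'⁻¹ ∈ U
    set W : Set G := interior P ∩ ((fun b' => a * b'⁻¹) ⁻¹' U) with hW
    have hWopen : IsOpen W :=
      isOpen_interior.inter (hU.preimage (continuous_const.mul continuous_inv))
    have hbW : b ∈ W := ⟨hb, by simpa [← hg] using hgU⟩
    -- the open image of X × W under the action
    have hVint : (Set.univ ×ˢ W : Set (X × G)) ∩ Set.univ ×ˢ interior P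
        = Set.univ ×ˢ W := by
      ext p
      simp only [Set.mem_inter_iff, Set.mem_prod, Set.mem_univ, true_and, and_iff_left_iff_imp]
      exact fun hp => hp.1
    have hO : IsOpen ((fun p : X × G => act p.1 p.2) '' (Set.univ ×ˢ W)) := by
      have := hopen (Set.univ ×ˢ W) (isOpen_univ.prod hWopen)
      rwa [hVint] at this
    have hmemO : act x a ∈ (fun p : X × G => act p.1 p.2) '' (Set.univ ×ˢ W) := by
      exact ⟨(y, b), ⟨trivial, hbW⟩, hy.symm⟩
    have hNopen : IsOpen ((fun x' => act x' a) ⁻¹'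
        ((fun p : X × G => act p.1 p.2) '' (Set.univ ×ˢ W))) :=
      hO.preimage (hact_cont1 a (interior_subset ha))
    refine Filter.mem_of_superset (hNopen.mem_nhds hmemO) ?_
    intro x' hx'
    obtain ⟨⟨y', b'⟩, ⟨_, hb'W⟩, hact'⟩ := hx'
    refine ⟨a * b'⁻¹, ?_, hb'W.2⟩
    rw [hQ, Set.mem_setOf_eq, h𝒢]
    exact ⟨a, interior_subset ha, b', interior_subset hb'W.1, y', rfl, hact'.symm⟩
end

section
/- Let P be a closed Ore subsemigroup of a locally compact group G with e ∈ P, G = PP⁻¹ and Int(P) dense in P. Let X be the closure of {P⁻¹a : a ∈ P} in the space 𝒞(G) of closed subsets of G with the Vietoris topology (the order compactification of P). Then for every open W ⊆ Int(P), XW = {A ∈ X : A ∩ W ≠ ∅}; in particular XW is open in X. -/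
open Pointwise

section Aux

variable {G : Type*} [Group G] [TopologicalSpace G] [IsTopologicalGroup G]
  [LocallyCompactSpace G] [T2Space G]

lemma mem_invP_mul_singleton {P : Set G} {a z : G} :
    z ∈ P⁻¹ * ({a} : Set G) ↔ ∃ p ∈ P, z = p⁻¹ * a := by
  constructor
  · rintro hz
    rcases Set.mem_mul.mp hz with ⟨x, hx, y, hy, rfl⟩
    rcases Set.mem_singleton_iff.mp hy with rfl
    exact ⟨x⁻¹, Set.mem_inv.mp hx, by simp⟩
  · rintro ⟨p, hp, rfl⟩
    exact Set.mem_mul.mpr ⟨p⁻¹, by simpa using hp, a, rfl, rfl⟩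

lemma mem_mul_singleton' {A : Set G} {w z : G} :
    z ∈ A * ({w} : Set G) ↔ ∃ y ∈ A, z = y * w := by
  constructor
  · rintro hz
    rcases Set.mem_mul.mp hz with ⟨x, hx, y, hy, rfl⟩
    rcases Set.mem_singleton_iff.mp hy with rfl
    exact ⟨x, hx, rfl⟩
  · rintro ⟨y, hy, rfl⟩
    exact Set.mem_mul.mpr ⟨y, hy, w, rfl, rfl⟩

lemma mul_singleton_mul_singleton (A : Set G) (u v : G) :
    A * ({u} : Set G) * ({v} : Set G) = A * ({u * v} : Set G) := by
  rw [mul_assoc, Set.singleton_mul_singleton]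

lemma mul_singleton_one (A : Set G) : A * ({(1 : G)} : Set G) = A := by
  ext z; simp [mem_mul_singleton']

/-- absorption: `P⁻¹ * {a}` is stable under left multiplication by `P⁻¹`. -/
lemma absorb {P : Set G} (hP_mul : ∀ a ∈ P, ∀ b ∈ P, a * b ∈ P) {a x q : G}
    (hx : x ∈ P⁻¹ * ({a} : Set G)) (hq : q ∈ P) : q⁻¹ * x ∈ P⁻¹ * ({a} : Set G) := by
  rcases mem_invP_mul_singleton.mp hx with ⟨p, hp, rfl⟩
  exact mem_invP_mul_singleton.mpr ⟨p * q, hP_mul p hp q hq, by group⟩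

lemma one_mem_base {P : Set G} {a : G} (ha : a ∈ P) : (1 : G) ∈ P⁻¹ * ({a} : Set G) :=
  mem_invP_mul_singleton.mpr ⟨a, ha, by group⟩

/-- The main workhorse: a concrete description of membership in the closure of the
base family with respect to the Fell topology. -/
lemma mem_closure_base_iff (P : Set G) (A : Set G) :
    A ∈ @closure (Set G) (fellTopology G) {B : Set G | ∃ a ∈ P, B = P⁻¹ * {a}} ↔
    ∀ K : Set G, IsCompact K → A ∩ K = ∅ →
      ∀ 𝒰 : Set (Set G), 𝒰.Finite → (∀ U ∈ 𝒰, IsOpen U ∧ (A ∩ U).Nonempty) →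
        ∃ a ∈ P, (P⁻¹ * {a}) ∩ K = ∅ ∧ ∀ U ∈ 𝒰, ((P⁻¹ * {a}) ∩ U).Nonempty := by
  letI : TopologicalSpace (Set G) := fellTopology G
  constructor
  · intro hA K hK hAK 𝒰 hfin h𝒰
    set O : Set (Set G) :=
      {B : Set G | B ∩ K = ∅} ∩ ⋂ U ∈ 𝒰, {B : Set G | (B ∩ U).Nonempty} with hOdef
    have hO : IsOpen O := by
      refine IsOpen.inter ?_ ?_
      · exact TopologicalSpace.GenerateOpen.basic _ (Or.inl ⟨K, hK, rfl⟩)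
      · exact hfin.isOpen_biInter fun U hU =>
          TopologicalSpace.GenerateOpen.basic _ (Or.inr ⟨U, (h𝒰 U hU).1, rfl⟩)
    have hAO : A ∈ O := by
      refine ⟨hAK, ?_⟩
      simp only [Set.mem_iInter]
      exact fun U hU => (h𝒰 U hU).2
    rcases mem_closure_iff.mp hA O hO hAO with ⟨B, hBO, a, haP, rfl⟩
    refine ⟨a, haP, hBO.1, ?_⟩
    intro U hU
    have := hBO.2
    simp only [Set.mem_iInter] at this
    exact this U hU
  · intro h
    rw [mem_closure_iff]
    intro O hO hAO
    have hbasis := TopologicalSpace.isTopologicalBasis_of_subbasis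
      (rfl : fellTopology G = TopologicalSpace.generateFrom _)
    rcases hbasis.mem_nhds_iff.mp (hO.mem_nhds hAO) with ⟨t, ⟨f, ⟨hfin, hfsub⟩, rfl⟩, hAt, htO⟩
    -- collect the compact sets and the open sets appearing in `f`
    set 𝒦 : Set (Set G) := {K | IsCompact K ∧ {B : Set G | B ∩ K = ∅} ∈ f} with h𝒦
    set 𝒰 : Set (Set G) := {U | IsOpen U ∧ {B : Set G | (B ∩ U).Nonempty} ∈ f} with h𝒰
    have hinj𝒦 : Set.InjOn (fun K => {B : Set G | B ∩ K = ∅}) 𝒦 := by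
      intro K₁ _ K₂ _ heq'
      have heq : {B : Set G | B ∩ K₁ = ∅} = {B : Set G | B ∩ K₂ = ∅} := heq'
      have key : ∀ x : G, x ∈ K₁ ↔ x ∈ K₂ := by
        intro x
        constructor
        · intro hx
          by_contra hx2
          have h2 : ({x} : Set G) ∈ {B : Set G | B ∩ K₂ = ∅} := by
            simp [Set.singleton_inter_eq_empty.mpr hx2]
          rw [← heq] at h2
          have : x ∈ ({x} : Set G) ∩ K₁ := ⟨rfl, hx⟩
          rw [h2] at this
          exact this
        · intro hx
          by_contra hx2
          have h2 : ({x} : Set G) ∈ {B : Set G | B ∩ K₁ = ∅} := by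
            simp [Set.singleton_inter_eq_empty.mpr hx2]
          rw [heq] at h2
          have : x ∈ ({x} : Set G) ∩ K₂ := ⟨rfl, hx⟩
          rw [h2] at this
          exact this
      exact Set.ext key
    have hinj𝒰 : Set.InjOn (fun U => {B : Set G | (B ∩ U).Nonempty}) 𝒰 := by
      intro U₁ _ U₂ _ heq'
      have heq : {B : Set G | (B ∩ U₁).Nonempty} = {B : Set G | (B ∩ U₂).Nonempty} := heq'
      have key : ∀ x : G, x ∈ U₁ ↔ x ∈ U₂ := by
        intro x
        constructor
        · intro hx
          have h2 : ({x} : Set G) ∈ {B : Set G | (B ∩ U₁).Nonempty} := ⟨x, rfl, hx⟩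
          rw [heq] at h2
          rcases h2 with ⟨y, hy, hyU⟩
          rcases hy with rfl
          exact hyU
        · intro hx
          have h2 : ({x} : Set G) ∈ {B : Set G | (B ∩ U₂).Nonempty} := ⟨x, rfl, hx⟩
          rw [← heq] at h2
          rcases h2 with ⟨y, hy, hyU⟩
          rcases hy with rfl
          exact hyU
      exact Set.ext key
    have hfin𝒦 : 𝒦.Finite := by
      refine Set.Finite.of_finite_image (hfin.subset ?_) hinj𝒦
      rintro _ ⟨K, hK, rfl⟩; exact hK.2
    have hfin𝒰 : 𝒰.Finite := by
      refine Set.Finite.of_finite_image (hfin.subset ?_) hinj𝒰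
      rintro _ ⟨U, hU, rfl⟩; exact hU.2
    have hK₀ : IsCompact (⋃₀ 𝒦) :=
      hfin𝒦.isCompact_sUnion fun K hK => hK.1
    have hAK₀ : A ∩ ⋃₀ 𝒦 = ∅ := by
      apply Set.eq_empty_iff_forall_notMem.mpr
      rintro x ⟨hxA, K, hK, hxK⟩
      have hAs : A ∈ {B : Set G | B ∩ K = ∅} := hAt _ hK.2
      have : x ∈ A ∩ K := ⟨hxA, hxK⟩
      rw [hAs] at this
      exact this
    have h𝒰prop : ∀ U ∈ 𝒰, IsOpen U ∧ (A ∩ U).Nonempty := by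
      intro U hU
      exact ⟨hU.1, hAt _ hU.2⟩
    rcases h (⋃₀ 𝒦) hK₀ hAK₀ 𝒰 hfin𝒰 h𝒰prop with ⟨a, haP, haK, haU⟩
    refine ⟨P⁻¹ * {a}, htO ?_, a, haP, rfl⟩
    intro s hs
    rcases hfsub hs with ⟨K, hKc, rfl⟩ | ⟨U, hUo, rfl⟩
    · show (P⁻¹ * {a}) ∩ K = ∅
      apply Set.eq_empty_iff_forall_notMem.mpr
      rintro x ⟨hx1, hx2⟩
      have : x ∈ (P⁻¹ * {a}) ∩ ⋃₀ 𝒦 := ⟨hx1, K, ⟨hKc, hs⟩, hx2⟩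
      rw [haK] at this
      exact this
    · exact haU U ⟨hUo, hs⟩

/-- Invariant: members of the closure absorb `(interior P)⁻¹ ·` applied
to points of their (ambient) closure. -/
lemma inv_interior_smul_mem {P : Set G} (hP_mul : ∀ a ∈ P, ∀ b ∈ P, a * b ∈ P)
    {A : Set G} (hA : A ∈ @closure (Set G) (fellTopology G) {B : Set G | ∃ a ∈ P, B = P⁻¹ * {a}})
    {q z : G} (hq : q ∈ interior P) (hz : z ∈ closure A) : q⁻¹ * z ∈ A := by
  by_contra hmem
  have hAK : A ∩ {q⁻¹ * z} = ∅ := by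
    simp [Set.inter_singleton_eq_empty.mpr hmem]
  have hUopen : IsOpen (interior P * ({q⁻¹ * z} : Set G)) := by
    rw [Set.mul_singleton]
    exact (isOpenMap_mul_right _) _ isOpen_interior
  have hzU : z ∈ interior P * ({q⁻¹ * z} : Set G) := by
    rw [Set.mul_singleton]
    exact ⟨q, hq, by group⟩
  have hAU : (A ∩ (interior P * ({q⁻¹ * z} : Set G))).Nonempty := by
    rcases mem_closure_iff.mp hz _ hUopen hzU with ⟨y, hy1, hy2⟩
    exact ⟨y, hy2, hy1⟩
  rcases (mem_closure_base_iff P A).mp hA _ (isCompact_singleton) hAK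
      {interior P * ({q⁻¹ * z} : Set G)} (Set.finite_singleton _)
      (by rintro U rfl; exact ⟨hUopen, hAU⟩) with ⟨a, haP, haK, haU⟩
  rcases haU _ rfl with ⟨y, hyB, hyU⟩
  rw [Set.mul_singleton] at hyU
  rcases hyU with ⟨p, hp, rfl⟩
  have : q⁻¹ * z ∈ P⁻¹ * ({a} : Set G) := by
    have := absorb hP_mul hyB (interior_subset hp)
    simpa using this
  have : q⁻¹ * z ∈ (P⁻¹ * ({a} : Set G)) ∩ {q⁻¹ * z} := ⟨this, rfl⟩
  rw [haK] at this
  exact this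

/-- Every member of the closure meets every neighbourhood of `1`. -/
lemma touches_one {P : Set G} {A : Set G}
    (hA : A ∈ @closure (Set G) (fellTopology G) {B : Set G | ∃ a ∈ P, B = P⁻¹ * {a}})
    {U : Set G} (hU : IsOpen U) (h1U : (1 : G) ∈ U) : (A ∩ U).Nonempty := by
  by_contra hne
  have hAU : A ∩ U = ∅ := Set.not_nonempty_iff_eq_empty.mp hne
  rcases exists_compact_subset hU h1U with ⟨K, hKc, h1K, hKU⟩
  have hAK : A ∩ K = ∅ := by
    apply Set.eq_empty_iff_forall_notMem.mpr
    rintro x ⟨hx1, hx2⟩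
    have : x ∈ A ∩ U := ⟨hx1, hKU hx2⟩
    rw [hAU] at this; exact this
  rcases (mem_closure_base_iff P A).mp hA K hKc hAK ∅ Set.finite_empty (by simp)
    with ⟨a, haP, haK, _⟩
  have : (1 : G) ∈ (P⁻¹ * ({a} : Set G)) ∩ K := ⟨one_mem_base haP, interior_subset h1K⟩
  rw [haK] at this
  exact this

/-- Right translation by elements of `P` preserves the closure of the base family. -/
lemma translate_mem {P : Set G} (hP_mul : ∀ a ∈ P, ∀ b ∈ P, a * b ∈ P)
    {A : Set G} (hA : A ∈ @closure (Set G) (fellTopology G) {B : Set G | ∃ a ∈ P, B = P⁻¹ * {a}})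
    {w : G} (hw : w ∈ P) :
    A * {w} ∈ @closure (Set G) (fellTopology G) {B : Set G | ∃ a ∈ P, B = P⁻¹ * {a}} := by
  rw [mem_closure_base_iff]
  intro K hK hAK 𝒰 hfin h𝒰
  have hK' : IsCompact (K * ({w⁻¹} : Set G)) := by
    rw [Set.mul_singleton]
    exact hK.image (continuous_mul_right _)
  have hAK' : A ∩ (K * ({w⁻¹} : Set G)) = ∅ := by
    apply Set.eq_empty_iff_forall_notMem.mpr
    rintro x ⟨hx1, hx2⟩
    rcases mem_mul_singleton'.mp hx2 with ⟨k, hk, rfl⟩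
    have : k ∈ (A * ({w} : Set G)) ∩ K := by
      refine ⟨mem_mul_singleton'.mpr ⟨k * w⁻¹, hx1, by group⟩, hk⟩
    rw [hAK] at this; exact this
  set 𝒰' : Set (Set G) := (fun U => U * ({w⁻¹} : Set G)) '' 𝒰 with h𝒰'
  have hfin' : 𝒰'.Finite := hfin.image _
  have h𝒰'prop : ∀ U ∈ 𝒰', IsOpen U ∧ (A ∩ U).Nonempty := by
    rintro _ ⟨U, hU, rfl⟩
    show IsOpen (U * ({w⁻¹} : Set G)) ∧ (A ∩ (U * ({w⁻¹} : Set G))).Nonempty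
    constructor
    · rw [Set.mul_singleton]
      exact (isOpenMap_mul_right _) _ (h𝒰 U hU).1
    · rcases (h𝒰 U hU).2 with ⟨y, hy1, hy2⟩
      rcases mem_mul_singleton'.mp hy1 with ⟨x, hx, rfl⟩
      exact ⟨x, hx, mem_mul_singleton'.mpr ⟨x * w, hy2, by group⟩⟩
  rcases (mem_closure_base_iff P A).mp hA _ hK' hAK' 𝒰' hfin' h𝒰'prop with ⟨a, haP, haK, haU⟩
  refine ⟨a * w, hP_mul a haP w hw, ?_, ?_⟩
  · apply Set.eq_empty_iff_forall_notMem.mpr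
    rintro z ⟨hz1, hz2⟩
    rcases mem_invP_mul_singleton.mp hz1 with ⟨p, hp, rfl⟩
    have hmem : p⁻¹ * a ∈ (P⁻¹ * ({a} : Set G)) ∩ (K * ({w⁻¹} : Set G)) := by
      refine ⟨mem_invP_mul_singleton.mpr ⟨p, hp, rfl⟩, ?_⟩
      exact mem_mul_singleton'.mpr ⟨p⁻¹ * (a * w), hz2, by group⟩
    rw [haK] at hmem; exact hmem
  · intro U hU
    rcases haU _ ⟨U, hU, rfl⟩ with ⟨y, hy1, hy2⟩
    rcases mem_mul_singleton'.mp hy2 with ⟨u, hu, rfl⟩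
    rcases mem_invP_mul_singleton.mp hy1 with ⟨p, hp, heq⟩
    refine ⟨u, ?_, hu⟩
    have : u = p⁻¹ * (a * w) := by
      have : u = (u * w⁻¹) * w := by group
      rw [this, heq]; group
    rw [this]
    exact mem_invP_mul_singleton.mpr ⟨p, hp, rfl⟩

/-- The key lemma: if `A` is in the closure and meets `W ⊆ int P`, then some
right translate `A * {w⁻¹}` with `w ∈ W` is again in the closure. -/
lemma key_translate {P : Set G} (hP_one : (1 : G) ∈ P)
    (hP_mul : ∀ a ∈ P, ∀ b ∈ P, a * b ∈ P)
    (hP_dense : P ⊆ closure (interior P))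
    {A : Set G} (hA : A ∈ @closure (Set G) (fellTopology G) {B : Set G | ∃ a ∈ P, B = P⁻¹ * {a}})
    {W : Set G} (hW_open : IsOpen W) (hWP : W ⊆ interior P)
    {x : G} (hxA : x ∈ A) (hxW : x ∈ W) :
    ∃ w ∈ W, A * {w⁻¹} ∈ @closure (Set G) (fellTopology G)
      {B : Set G | ∃ a ∈ P, B = P⁻¹ * {a}} := by
  -- choose p₀ ∈ interior P with p₀⁻¹ * x ∈ W
  have h1cl : (1 : G) ∈ closure (interior P) := hP_dense hP_one
  have hNopen : IsOpen ((fun p : G => p⁻¹ * x) ⁻¹' W) :=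
    hW_open.preimage (by continuity)
  have h1N : (1 : G) ∈ (fun p : G => p⁻¹ * x) ⁻¹' W := by simpa using hxW
  rcases mem_closure_iff.mp h1cl _ hNopen h1N with ⟨p₀, hp₀N, hp₀⟩
  set w : G := p₀⁻¹ * x with hwdef
  have hwW : w ∈ W := hp₀N
  refine ⟨w, hwW, ?_⟩
  rw [mem_closure_base_iff]
  intro K hK hdisj 𝒰 hfin h𝒰
  -- translate the data by w
  have hKw : IsCompact (K * ({w} : Set G)) := by
    rw [Set.mul_singleton]
    exact hK.image (continuous_mul_right _)
  have hAKw : A ∩ (K * ({w} : Set G)) = ∅ := by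
    apply Set.eq_empty_iff_forall_notMem.mpr
    rintro y ⟨hy1, hy2⟩
    rcases mem_mul_singleton'.mp hy2 with ⟨k, hk, rfl⟩
    have : k ∈ (A * ({w⁻¹} : Set G)) ∩ K :=
      ⟨mem_mul_singleton'.mpr ⟨k * w, hy1, by group⟩, hk⟩
    rw [hdisj] at this; exact this
  -- the extra lower condition : A meets (interior P) * {w}
  have hO'open : IsOpen (interior P * ({w} : Set G)) := by
    rw [Set.mul_singleton]
    exact (isOpenMap_mul_right _) _ isOpen_interior
  have hAO' : (A ∩ (interior P * ({w} : Set G))).Nonempty := by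
    -- find q ∈ interior P with q⁻¹ * p₀ ∈ interior P
    have hN2open : IsOpen ((fun q : G => q⁻¹ * p₀) ⁻¹' interior P) :=
      isOpen_interior.preimage (by continuity)
    have h1N2 : (1 : G) ∈ (fun q : G => q⁻¹ * p₀) ⁻¹' interior P := by simpa using hp₀
    rcases mem_closure_iff.mp h1cl _ hN2open h1N2 with ⟨q, hqN2, hq⟩
    have hqx : q⁻¹ * x ∈ A := inv_interior_smul_mem hP_mul hA hq (subset_closure hxA)
    refine ⟨q⁻¹ * x, hqx, ?_⟩
    rw [Set.mul_singleton]
    refine ⟨q⁻¹ * p₀, hqN2, by rw [hwdef]; group⟩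
  set 𝒰' : Set (Set G) := insert (interior P * ({w} : Set G))
      ((fun U => U * ({w} : Set G)) '' 𝒰) with h𝒰'
  have hfin' : 𝒰'.Finite := (hfin.image _).insert _
  have h𝒰'prop : ∀ U ∈ 𝒰', IsOpen U ∧ (A ∩ U).Nonempty := by
    rintro V hV
    rcases hV with rfl | ⟨U, hU, rfl⟩
    · exact ⟨hO'open, hAO'⟩
    · show IsOpen (U * ({w} : Set G)) ∧ (A ∩ (U * ({w} : Set G))).Nonempty
      constructor
      · rw [Set.mul_singleton]
        exact (isOpenMap_mul_right _) _ (h𝒰 U hU).1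
      · rcases (h𝒰 U hU).2 with ⟨y, hy1, hy2⟩
        rcases mem_mul_singleton'.mp hy1 with ⟨z, hz, rfl⟩
        exact ⟨z, hz, mem_mul_singleton'.mpr ⟨z * w⁻¹, hy2, by group⟩⟩
  rcases (mem_closure_base_iff P A).mp hA _ hKw hAKw 𝒰' hfin' h𝒰'prop with ⟨a, haP, haK, haU⟩
  -- from the extra condition, w ∈ P⁻¹ * {a}
  rcases haU _ (Set.mem_insert _ _) with ⟨x₀, hx₀B, hx₀O⟩
  rw [Set.mul_singleton] at hx₀O
  rcases hx₀O with ⟨p₁, hp₁, rfl⟩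
  have hwB : w ∈ P⁻¹ * ({a} : Set G) := by
    have := absorb hP_mul hx₀B (interior_subset hp₁)
    simpa using this
  rcases mem_invP_mul_singleton.mp hwB with ⟨r, hr, hwr⟩
  -- b := a * w⁻¹ = r ∈ P
  have hb : a * w⁻¹ = r := by rw [hwr]; group
  refine ⟨a * w⁻¹, by rw [hb]; exact hr, ?_, ?_⟩
  · apply Set.eq_empty_iff_forall_notMem.mpr
    rintro z ⟨hz1, hz2⟩
    rcases mem_invP_mul_singleton.mp hz1 with ⟨p, hp, rfl⟩
    have : p⁻¹ * (a * w⁻¹) * w ∈ (P⁻¹ * ({a} : Set G)) ∩ (K * ({w} : Set G)) := by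
      refine ⟨?_, mem_mul_singleton'.mpr ⟨p⁻¹ * (a * w⁻¹), hz2, rfl⟩⟩
      exact mem_invP_mul_singleton.mpr ⟨p, hp, by group⟩
    rw [haK] at this; exact this
  · intro U hU
    rcases haU _ (Set.mem_insert_of_mem _ ⟨U, hU, rfl⟩) with ⟨y, hy1, hy2⟩
    rcases mem_mul_singleton'.mp hy2 with ⟨u, hu, rfl⟩
    rcases mem_invP_mul_singleton.mp hy1 with ⟨p, hp, heq⟩
    refine ⟨u, ?_, hu⟩
    have hueq : u = p⁻¹ * (a * w⁻¹) := by
      have h0 : u = (u * w) * w⁻¹ := by group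
      rw [h0, heq]; group
    rw [hueq]
    exact mem_invP_mul_singleton.mpr ⟨p, hp, rfl⟩

end Aux

/-- Let `X` be the order compactification of `P` (the closure of `{P⁻¹a : a ∈ P}` in the
hyperspace of `G`).  For every open `W ⊆ Int(P)`, `XW = {A ∈ X : A ∩ W ≠ ∅}`; in
particular `XW` is open in `X`. -/
theorem stmt15 {G : Type*} [Group G] [TopologicalSpace G] [IsTopologicalGroup G]
    [LocallyCompactSpace G] [T2Space G] [SecondCountableTopology G]
    (P : Set G) (hP_closed : IsClosed P) (hP_one : (1 : G) ∈ P)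
    (hP_mul : ∀ a ∈ P, ∀ b ∈ P, a * b ∈ P)
    (hOre : P * P⁻¹ = Set.univ)
    (hP_dense : P ⊆ closure (interior P))
    (Xc : Set (Set G))
    (hXc : Xc = @closure (Set G) (fellTopology G) {B : Set G | ∃ a ∈ P, B = P⁻¹ * {a}})
    (W : Set G) (hW_open : IsOpen W) (hW : W ⊆ interior P) :
    {C : Set G | ∃ A ∈ Xc, ∃ w ∈ W, C = A * {w}} = {A ∈ Xc | (A ∩ W).Nonempty} ∧
      ∃ V : Set (Set G), @IsOpen (Set G) (fellTopology G) V ∧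
        {A ∈ Xc | (A ∩ W).Nonempty} = Xc ∩ V := by
  subst hXc
  constructor
  · ext C
    simp only [Set.mem_setOf_eq, Set.mem_sep_iff]
    constructor
    · rintro ⟨A, hA, w, hwW, rfl⟩
      have hwP : w ∈ P := interior_subset (hW hwW)
      refine ⟨translate_mem hP_mul hA hwP, ?_⟩
      -- A meets W * {w⁻¹}, a neighbourhood of 1
      have hUopen : IsOpen (W * ({w⁻¹} : Set G)) := by
        rw [Set.mul_singleton]
        exact (isOpenMap_mul_right _) _ hW_open
      have h1U : (1 : G) ∈ W * ({w⁻¹} : Set G) :=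
        mem_mul_singleton'.mpr ⟨w, hwW, by group⟩
      rcases touches_one hA hUopen h1U with ⟨y, hyA, hyU⟩
      rcases mem_mul_singleton'.mp hyU with ⟨u, hu, rfl⟩
      refine ⟨u, ?_, hu⟩
      exact mem_mul_singleton'.mpr ⟨u * w⁻¹, hyA, by group⟩
    · rintro ⟨hC, x, hxC, hxW⟩
      rcases key_translate hP_one hP_mul hP_dense hC hW_open hW hxC hxW with ⟨w, hwW, hmem⟩
      refine ⟨C * {w⁻¹}, hmem, w, hwW, ?_⟩
      rw [mul_singleton_mul_singleton]
      simp [mul_singleton_one]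
  · refine ⟨{B : Set G | (B ∩ W).Nonempty}, ?_, ?_⟩
    · exact TopologicalSpace.GenerateOpen.basic _ (Or.inr ⟨W, hW_open, rfl⟩)
    · ext A
      simp [Set.mem_sep_iff, Set.mem_inter_iff]
end
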